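/- arXiv:1502.05759 — 4 statements merged into one kernel-verified Lean document; each statement's English description precedes it below -/
import Mathlib

section
/- The map from SU(3) × (0,1) to ℂ³ × ℂ³ sending (M, t) to (t·c₁, √(1−t²)·c̄₂), where c₁ and c₂ are the first and second columns of M and c̄₂ is the componentwise complex conjugate of c₂, is a homeomorphism onto X = {(z,w) ∈ (ℂ³∖{0}) × (ℂ³∖{0}) : z·w = 0, ‖z‖² + ‖w‖² = 1} with its subspace topology. -/
noncomputable abbrev C3 := EuclideanSpace ℂ (Fin 3)
noncomputable def dotProd (z w : C3) : ℂ := ∑ i, z i * w i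
noncomputable def vec (f : Fin 3 → ℂ) : C3 := WithLp.toLp 2 f
noncomputable abbrev SU3 := Matrix.specialUnitaryGroup (Fin 3) ℂ
def spaceX : Set (C3 × C3) :=
  {p | p.1 ≠ 0 ∧ p.2 ≠ 0 ∧ dotProd p.1 p.2 = 0 ∧ ‖p.1‖ ^ 2 + ‖p.2‖ ^ 2 = 1}

noncomputable def cr (u v : Fin 3 → ℂ) : Fin 3 → ℂ :=
  ![u 1 * v 2 - u 2 * v 1, u 2 * v 0 - u 0 * v 2, u 0 * v 1 - u 1 * v 0]

noncomputable def crc (u v : Fin 3 → ℂ) : Fin 3 → ℂ := fun i => (starRingEnd ℂ) (cr u v i)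

noncomputable def colM (u v w : Fin 3 → ℂ) : Matrix (Fin 3) (Fin 3) ℂ :=
  Matrix.of fun i j => ![u i, v i, w i] j

lemma colM_mem_SU3 (u v : Fin 3 → ℂ)
    (hu' : ∑ i, (starRingEnd ℂ) (u i) * u i = 1)
    (hv' : ∑ i, (starRingEnd ℂ) (v i) * v i = 1)
    (huv' : ∑ i, (starRingEnd ℂ) (u i) * v i = 0)
    (hvu' : ∑ i, (starRingEnd ℂ) (v i) * u i = 0) :
    colM u v (crc u v) ∈ SU3 := by
  simp only [Fin.sum_univ_three] at hu' hv' huv' hvu'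
  have hu := hu'; have hv := hv'; have huv := huv'; have hvu := hvu'
  rw [Matrix.mem_specialUnitaryGroup_iff]
  constructor
  · rw [Matrix.mem_unitaryGroup_iff']
    ext i j
    simp only [Matrix.mul_apply, Matrix.star_apply, Fin.sum_univ_three, Matrix.one_apply]
    fin_cases i <;> fin_cases j <;>
      simp [colM, crc, cr, map_mul, map_sub, Complex.conj_conj]
    case _ => linear_combination hu
    case _ => linear_combination huv
    case _ => ring
    case _ => linear_combination hvu
    case _ => linear_combination hv
    case _ => ring
    case _ => ring
    case _ => ring
    case _ => linear_combination ((starRingEnd ℂ) (v 0) * v 0 + (starRingEnd ℂ) (v 1) * v 1 +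
        (starRingEnd ℂ) (v 2) * v 2) * hu + hv - ((starRingEnd ℂ) (v 0) * u 0 +
        (starRingEnd ℂ) (v 1) * u 1 + (starRingEnd ℂ) (v 2) * u 2) * huv
  · rw [Matrix.det_fin_three]
    simp [colM, crc, cr, map_mul, map_sub]
    linear_combination ((starRingEnd ℂ) (v 0) * v 0 + (starRingEnd ℂ) (v 1) * v 1 +
      (starRingEnd ℂ) (v 2) * v 2) * hu + hv - ((starRingEnd ℂ) (v 0) * u 0 +
      (starRingEnd ℂ) (v 1) * u 1 + (starRingEnd ℂ) (v 2) * u 2) * huv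

lemma SU3_third_col {A : Matrix (Fin 3) (Fin 3) ℂ} (hA : A ∈ SU3) (i : Fin 3) :
    A i 2 = crc (fun k => A k 0) (fun k => A k 1) i := by
  rw [Matrix.mem_specialUnitaryGroup_iff] at hA
  obtain ⟨hU, hdet⟩ := hA
  have hstar : star A * A = 1 := (Matrix.mem_unitaryGroup_iff').mp hU
  have hadj : star A = A.adjugate := by
    calc star A = star A * (A * A.adjugate) := by
          rw [Matrix.mul_adjugate, hdet, one_smul, Matrix.mul_one]
    _ = (star A * A) * A.adjugate := by rw [Matrix.mul_assoc]
    _ = A.adjugate := by rw [hstar, Matrix.one_mul]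
  have h4 : ∀ j : Fin 3, A j 2 = (starRingEnd ℂ) (A.adjugate 2 j) := fun j => by
    have : (starRingEnd ℂ) (A j 2) = A.adjugate 2 j := by rw [← hadj]; rfl
    rw [← this, Complex.conj_conj]
  have h5 := h4 i
  rw [Matrix.adjugate_fin_three] at h5
  fin_cases i <;>
    · simp [crc, cr, map_mul, map_sub] at h5 ⊢
      linear_combination h5

lemma SU3_cols {A : Matrix (Fin 3) (Fin 3) ℂ} (hA : A ∈ SU3) (j k : Fin 3) :
    ∑ i, (starRingEnd ℂ) (A i j) * A i k = if j = k then 1 else 0 := by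
  have hU := (Matrix.mem_specialUnitaryGroup_iff.mp hA).1
  have hstar : star A * A = 1 := Matrix.mem_unitaryGroup_iff'.mp hU
  have h := congrFun (congrFun hstar j) k
  simpa [Matrix.mul_apply, Matrix.star_apply, Matrix.one_apply] using h

lemma norm_sq_C3 (x : C3) : ((‖x‖ ^ 2 : ℝ) : ℂ) = ∑ i, (starRingEnd ℂ) (x i) * x i := by
  have h : ‖x‖ ^ 2 = ∑ i, Complex.normSq (x i) := by
    rw [EuclideanSpace.norm_eq, Real.sq_sqrt (Finset.sum_nonneg fun i _ => sq_nonneg _)]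
    exact Finset.sum_congr rfl fun i _ => by
      rw [← Complex.sq_norm]
  rw [h]
  push_cast
  exact Finset.sum_congr rfl fun i _ => Complex.normSq_eq_conj_mul_self

noncomputable def Fmap (A : Matrix (Fin 3) (Fin 3) ℂ) (t : ℝ) : C3 × C3 :=
  (vec fun i => (t : ℂ) * A i 0,
   vec fun i => ((Real.sqrt (1 - t ^ 2) : ℝ) : ℂ) * (starRingEnd ℂ) (A i 1))

lemma Fmap_norm1_sq {A : Matrix (Fin 3) (Fin 3) ℂ} (hA : A ∈ SU3) (t : ℝ) :
    ‖(Fmap A t).1‖ ^ 2 = t ^ 2 := by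
  have h := norm_sq_C3 (Fmap A t).1
  have hc : ∀ i, (starRingEnd ℂ) ((Fmap A t).1 i) * ((Fmap A t).1 i)
      = (t : ℂ) ^ 2 * ((starRingEnd ℂ) (A i 0) * A i 0) := fun i => by
    show (starRingEnd ℂ) ((t : ℂ) * A i 0) * ((t : ℂ) * A i 0) = _
    simp only [map_mul, Complex.conj_ofReal]
    ring
  rw [Finset.sum_congr rfl (fun i _ => hc i), ← Finset.mul_sum, SU3_cols hA 0 0] at h
  simp at h
  exact_mod_cast h

lemma Fmap_norm2_sq {A : Matrix (Fin 3) (Fin 3) ℂ} (hA : A ∈ SU3) (t : ℝ) :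
    ‖(Fmap A t).2‖ ^ 2 = Real.sqrt (1 - t ^ 2) ^ 2 := by
  set s := Real.sqrt (1 - t ^ 2) with hs
  have h := norm_sq_C3 (Fmap A t).2
  have hc : ∀ i, (starRingEnd ℂ) ((Fmap A t).2 i) * ((Fmap A t).2 i)
      = (s : ℂ) ^ 2 * ((starRingEnd ℂ) (A i 1) * A i 1) := fun i => by
    show (starRingEnd ℂ) ((s : ℂ) * (starRingEnd ℂ) (A i 1)) * ((s : ℂ) * (starRingEnd ℂ) (A i 1)) = _
    simp only [map_mul, Complex.conj_ofReal, Complex.conj_conj]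
    ring
  rw [Finset.sum_congr rfl (fun i _ => hc i), ← Finset.mul_sum, SU3_cols hA 1 1] at h
  simp at h
  exact_mod_cast h

lemma Fmap_mem {A : Matrix (Fin 3) (Fin 3) ℂ} (hA : A ∈ SU3) {t : ℝ}
    (ht : t ∈ Set.Ioo (0 : ℝ) 1) : Fmap A t ∈ spaceX := by
  obtain ⟨ht0, ht1⟩ := ht
  set s := Real.sqrt (1 - t ^ 2) with hs
  have h1t : 0 < 1 - t ^ 2 := by nlinarith
  have hs0 : 0 < s := Real.sqrt_pos.2 h1t
  have hs2 : s ^ 2 = 1 - t ^ 2 := Real.sq_sqrt h1t.le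
  have hn1 := Fmap_norm1_sq hA t
  have hn2 := Fmap_norm2_sq hA t
  refine ⟨?_, ?_, ?_, ?_⟩
  · intro h
    rw [h] at hn1
    simp only [norm_zero] at hn1
    nlinarith
  · intro h
    rw [h] at hn2
    simp only [norm_zero] at hn2
    nlinarith
  · show dotProd (Fmap A t).1 (Fmap A t).2 = 0
    have hc : ∀ i, (Fmap A t).1 i * (Fmap A t).2 i
        = ((t : ℂ) * (s : ℂ)) * (starRingEnd ℂ) ((starRingEnd ℂ) (A i 0) * A i 1) := fun i => by
      show ((t : ℂ) * A i 0) * ((s : ℂ) * (starRingEnd ℂ) (A i 1)) = _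
      simp only [map_mul, Complex.conj_conj]
      ring
    rw [dotProd, Finset.sum_congr rfl (fun i _ => hc i), ← Finset.mul_sum, ← map_sum,
      SU3_cols hA 0 1]
    simp
  · rw [hn1, hn2, hs2]; ring

noncomputable def Ucol (p : C3 × C3) : Fin 3 → ℂ := fun i => p.1 i / ((‖p.1‖ : ℝ) : ℂ)
noncomputable def Vcol (p : C3 × C3) : Fin 3 → ℂ :=
  fun i => (starRingEnd ℂ) (p.2 i) / ((‖p.2‖ : ℝ) : ℂ)
noncomputable def Gmat (p : C3 × C3) : Matrix (Fin 3) (Fin 3) ℂ :=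
  colM (Ucol p) (Vcol p) (crc (Ucol p) (Vcol p))

lemma spaceX_norm1_pos {p : C3 × C3} (hp : p ∈ spaceX) : 0 < ‖p.1‖ :=
  norm_pos_iff.mpr hp.1

lemma spaceX_norm2_pos {p : C3 × C3} (hp : p ∈ spaceX) : 0 < ‖p.2‖ :=
  norm_pos_iff.mpr hp.2.1

lemma spaceX_mem_Ioo {p : C3 × C3} (hp : p ∈ spaceX) : ‖p.1‖ ∈ Set.Ioo (0 : ℝ) 1 := by
  have h1 := spaceX_norm1_pos hp
  have h2 := spaceX_norm2_pos hp
  have h3 := hp.2.2.2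
  exact ⟨h1, by nlinarith⟩

lemma Gmat_mem {p : C3 × C3} (hp : p ∈ spaceX) : Gmat p ∈ SU3 := by
  have ht0 := spaceX_norm1_pos hp
  have hs0 := spaceX_norm2_pos hp
  have htc : ((‖p.1‖ : ℝ) : ℂ) ≠ 0 := Complex.ofReal_ne_zero.mpr ht0.ne'
  have hsc : ((‖p.2‖ : ℝ) : ℂ) ≠ 0 := Complex.ofReal_ne_zero.mpr hs0.ne'
  have hzz : ∑ i, (starRingEnd ℂ) (p.1 i) * p.1 i = ((‖p.1‖ ^ 2 : ℝ) : ℂ) :=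
    (norm_sq_C3 p.1).symm
  have hww : ∑ i, (starRingEnd ℂ) (p.2 i) * p.2 i = ((‖p.2‖ ^ 2 : ℝ) : ℂ) :=
    (norm_sq_C3 p.2).symm
  have hzw : ∑ i, p.1 i * p.2 i = 0 := hp.2.2.1
  apply colM_mem_SU3
  · have hc : ∀ i, (starRingEnd ℂ) (Ucol p i) * Ucol p i
        = ((starRingEnd ℂ) (p.1 i) * p.1 i) / ((‖p.1‖ : ℝ) : ℂ) ^ 2 := fun i => by
      simp only [Ucol, map_div₀, Complex.conj_ofReal]
      ring
    rw [Finset.sum_congr rfl (fun i _ => hc i), ← Finset.sum_div, hzz]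
    push_cast
    field_simp
  · have hc : ∀ i, (starRingEnd ℂ) (Vcol p i) * Vcol p i
        = ((starRingEnd ℂ) (p.2 i) * p.2 i) / ((‖p.2‖ : ℝ) : ℂ) ^ 2 := fun i => by
      simp only [Vcol, map_div₀, Complex.conj_ofReal, Complex.conj_conj]
      ring
    rw [Finset.sum_congr rfl (fun i _ => hc i), ← Finset.sum_div, hww]
    push_cast
    field_simp
  · have hc : ∀ i, (starRingEnd ℂ) (Ucol p i) * Vcol p i
        = (starRingEnd ℂ) (p.1 i * p.2 i) / (((‖p.1‖ : ℝ) : ℂ) * ((‖p.2‖ : ℝ) : ℂ)) := fun i => by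
      simp only [Ucol, Vcol, map_div₀, map_mul, Complex.conj_ofReal]
      ring
    rw [Finset.sum_congr rfl (fun i _ => hc i), ← Finset.sum_div, ← map_sum, hzw]
    simp
  · have hc : ∀ i, (starRingEnd ℂ) (Vcol p i) * Ucol p i
        = (p.1 i * p.2 i) / (((‖p.1‖ : ℝ) : ℂ) * ((‖p.2‖ : ℝ) : ℂ)) := fun i => by
      simp only [Ucol, Vcol, map_div₀, Complex.conj_ofReal, Complex.conj_conj]
      ring
    rw [Finset.sum_congr rfl (fun i _ => hc i), ← Finset.sum_div, hzw]
    simp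

lemma Fmap_norm1 {A : Matrix (Fin 3) (Fin 3) ℂ} (hA : A ∈ SU3) {t : ℝ} (ht0 : 0 ≤ t) :
    ‖(Fmap A t).1‖ = t := by
  rw [← Real.sqrt_sq (norm_nonneg _), Fmap_norm1_sq hA, Real.sqrt_sq ht0]

lemma Fmap_norm2 {A : Matrix (Fin 3) (Fin 3) ℂ} (hA : A ∈ SU3) (t : ℝ) :
    ‖(Fmap A t).2‖ = Real.sqrt (1 - t ^ 2) := by
  rw [← Real.sqrt_sq (norm_nonneg _), Fmap_norm2_sq hA, Real.sqrt_sq (Real.sqrt_nonneg _)]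

lemma Ucol_Fmap {A : Matrix (Fin 3) (Fin 3) ℂ} (hA : A ∈ SU3) {t : ℝ}
    (ht : t ∈ Set.Ioo (0 : ℝ) 1) : Ucol (Fmap A t) = fun k => A k 0 := by
  funext i
  have htc : ((t : ℝ) : ℂ) ≠ 0 := Complex.ofReal_ne_zero.mpr ht.1.ne'
  show (Fmap A t).1 i / ((‖(Fmap A t).1‖ : ℝ) : ℂ) = A i 0
  rw [Fmap_norm1 hA ht.1.le]
  show (t : ℂ) * A i 0 / (t : ℂ) = A i 0
  field_simp

lemma Vcol_Fmap {A : Matrix (Fin 3) (Fin 3) ℂ} (hA : A ∈ SU3) {t : ℝ}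
    (ht : t ∈ Set.Ioo (0 : ℝ) 1) : Vcol (Fmap A t) = fun k => A k 1 := by
  funext i
  have h1t : 0 < 1 - t ^ 2 := by nlinarith [ht.1, ht.2]
  have hs0 : 0 < Real.sqrt (1 - t ^ 2) := Real.sqrt_pos.2 h1t
  have hsc : ((Real.sqrt (1 - t ^ 2) : ℝ) : ℂ) ≠ 0 := Complex.ofReal_ne_zero.mpr hs0.ne'
  show (starRingEnd ℂ) ((Fmap A t).2 i) / ((‖(Fmap A t).2‖ : ℝ) : ℂ) = A i 1
  rw [Fmap_norm2 hA]
  show (starRingEnd ℂ) (((Real.sqrt (1 - t ^ 2) : ℝ) : ℂ) * (starRingEnd ℂ) (A i 1)) /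
      ((Real.sqrt (1 - t ^ 2) : ℝ) : ℂ) = A i 1
  rw [map_mul, Complex.conj_ofReal, Complex.conj_conj]
  field_simp

lemma Gmat_Fmap {A : Matrix (Fin 3) (Fin 3) ℂ} (hA : A ∈ SU3) {t : ℝ}
    (ht : t ∈ Set.Ioo (0 : ℝ) 1) : Gmat (Fmap A t) = A := by
  rw [Gmat, Ucol_Fmap hA ht, Vcol_Fmap hA ht]
  ext i j
  fin_cases j
  · rfl
  · rfl
  · exact (SU3_third_col hA i).symm

lemma Fmap_Gmat {p : C3 × C3} (hp : p ∈ spaceX) : Fmap (Gmat p) ‖p.1‖ = p := by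
  have ht0 := spaceX_norm1_pos hp
  have hs0 := spaceX_norm2_pos hp
  have htc : ((‖p.1‖ : ℝ) : ℂ) ≠ 0 := Complex.ofReal_ne_zero.mpr ht0.ne'
  have hsc : ((‖p.2‖ : ℝ) : ℂ) ≠ 0 := Complex.ofReal_ne_zero.mpr hs0.ne'
  have hsq : Real.sqrt (1 - ‖p.1‖ ^ 2) = ‖p.2‖ := by
    rw [show 1 - ‖p.1‖ ^ 2 = ‖p.2‖ ^ 2 by have := hp.2.2.2; linarith,
      Real.sqrt_sq (norm_nonneg _)]
  refine Prod.ext ?_ ?_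
  · ext i
    show ((‖p.1‖ : ℝ) : ℂ) * (p.1 i / ((‖p.1‖ : ℝ) : ℂ)) = p.1 i
    field_simp
  · ext i
    show ((Real.sqrt (1 - ‖p.1‖ ^ 2) : ℝ) : ℂ) *
        (starRingEnd ℂ) ((starRingEnd ℂ) (p.2 i) / ((‖p.2‖ : ℝ) : ℂ)) = p.2 i
    rw [hsq, map_div₀, Complex.conj_conj, Complex.conj_ofReal]
    field_simp

noncomputable def Fequiv : SU3 × (Set.Ioo (0 : ℝ) 1) ≃ spaceX where
  toFun q := ⟨Fmap q.1.1 q.2.1, Fmap_mem q.1.2 q.2.2⟩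
  invFun p := (⟨Gmat p.1, Gmat_mem p.2⟩, ⟨‖p.1.1‖, spaceX_mem_Ioo p.2⟩)
  left_inv q := by
    refine Prod.ext (Subtype.ext ?_) (Subtype.ext ?_)
    · exact Gmat_Fmap q.1.2 q.2.2
    · exact Fmap_norm1 q.1.2 q.2.2.1.le
  right_inv p := Subtype.ext (Fmap_Gmat p.2)

lemma cont_F : Continuous (Fequiv : SU3 × (Set.Ioo (0 : ℝ) 1) → spaceX) := by
  apply Continuous.subtype_mk
  have hM : Continuous fun q : SU3 × (Set.Ioo (0 : ℝ) 1) =>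
      (q.1 : Matrix (Fin 3) (Fin 3) ℂ) := continuous_subtype_val.comp continuous_fst
  have ht : Continuous fun q : SU3 × (Set.Ioo (0 : ℝ) 1) => (q.2 : ℝ) :=
    continuous_subtype_val.comp continuous_snd
  apply Continuous.prodMk
  · show Continuous fun q : SU3 × (Set.Ioo (0 : ℝ) 1) =>
      (EuclideanSpace.equiv (Fin 3) ℂ).symm fun i => (((q.2 : ℝ) : ℝ) : ℂ) * (q.1 : Matrix (Fin 3) (Fin 3) ℂ) i 0
    exact (EuclideanSpace.equiv (Fin 3) ℂ).symm.continuous.comp <| continuous_pi fun i =>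
      (Complex.continuous_ofReal.comp ht).mul (hM.matrix_elem i 0)
  · show Continuous fun q : SU3 × (Set.Ioo (0 : ℝ) 1) =>
      (EuclideanSpace.equiv (Fin 3) ℂ).symm fun i =>
        ((Real.sqrt (1 - (q.2 : ℝ) ^ 2) : ℝ) : ℂ) * (starRingEnd ℂ) ((q.1 : Matrix (Fin 3) (Fin 3) ℂ) i 1)
    refine (EuclideanSpace.equiv (Fin 3) ℂ).symm.continuous.comp <| continuous_pi fun i => ?_
    refine Continuous.mul (Complex.continuous_ofReal.comp ?_) ?_
    · exact Real.continuous_sqrt.comp (continuous_const.sub (ht.pow 2))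
    · simp only [starRingEnd_apply]
      exact (hM.matrix_elem i 1).star

lemma cont_G : Continuous (Fequiv.symm : spaceX → SU3 × (Set.Ioo (0 : ℝ) 1)) := by
  have hz : Continuous fun p : spaceX => (p : C3 × C3).1 :=
    continuous_fst.comp continuous_subtype_val
  have hw : Continuous fun p : spaceX => (p : C3 × C3).2 :=
    continuous_snd.comp continuous_subtype_val
  have hznorm : Continuous fun p : spaceX => ‖(p : C3 × C3).1‖ := hz.norm
  have hwnorm : Continuous fun p : spaceX => ‖(p : C3 × C3).2‖ := hw.norm
  have hzc : Continuous fun p : spaceX => ((‖(p : C3 × C3).1‖ : ℝ) : ℂ) :=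
    Complex.continuous_ofReal.comp hznorm
  have hwc : Continuous fun p : spaceX => ((‖(p : C3 × C3).2‖ : ℝ) : ℂ) :=
    Complex.continuous_ofReal.comp hwnorm
  have hzne : ∀ p : spaceX, ((‖(p : C3 × C3).1‖ : ℝ) : ℂ) ≠ 0 := fun p =>
    Complex.ofReal_ne_zero.mpr (spaceX_norm1_pos p.2).ne'
  have hwne : ∀ p : spaceX, ((‖(p : C3 × C3).2‖ : ℝ) : ℂ) ≠ 0 := fun p =>
    Complex.ofReal_ne_zero.mpr (spaceX_norm2_pos p.2).ne'
  have hzi : ∀ i, Continuous fun p : spaceX => (p : C3 × C3).1 i := fun i =>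
    (continuous_apply i).comp ((EuclideanSpace.equiv (Fin 3) ℂ).continuous.comp hz)
  have hwi : ∀ i, Continuous fun p : spaceX => (p : C3 × C3).2 i := fun i =>
    (continuous_apply i).comp ((EuclideanSpace.equiv (Fin 3) ℂ).continuous.comp hw)
  have hU : ∀ i, Continuous fun p : spaceX => Ucol (p : C3 × C3) i := fun i =>
    (hzi i).div hzc hzne
  have hV : ∀ i, Continuous fun p : spaceX => Vcol (p : C3 × C3) i := fun i => by
    refine Continuous.div ?_ hwc hwne
    simp only [starRingEnd_apply]
    exact (hwi i).star
  apply Continuous.prodMk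
  · apply Continuous.subtype_mk
    apply continuous_matrix
    intro i j
    fin_cases j
    · exact hU i
    · exact hV i
    · show Continuous fun p : spaceX =>
        (starRingEnd ℂ) (cr (Ucol (p : C3 × C3)) (Vcol (p : C3 × C3)) i)
      simp only [starRingEnd_apply]
      apply Continuous.star
      fin_cases i
      · exact ((hU 1).mul (hV 2)).sub ((hU 2).mul (hV 1))
      · exact ((hU 2).mul (hV 0)).sub ((hU 0).mul (hV 2))
      · exact ((hU 0).mul (hV 1)).sub ((hU 1).mul (hV 0))
  · exact hznorm.subtype_mk _

theorem SU3_prod_Ioo_homeomorph_X :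
    ∃ h : (SU3 × (Set.Ioo (0 : ℝ) 1)) ≃ₜ spaceX,
      ∀ (M : SU3) (t : Set.Ioo (0 : ℝ) 1),
        (h (M, t) : C3 × C3) =
          (vec fun i => ((t : ℝ) : ℂ) * (M : Matrix (Fin 3) (Fin 3) ℂ) i 0,
           vec fun i => ((Real.sqrt (1 - (t : ℝ) ^ 2) : ℝ) : ℂ) *
             (starRingEnd ℂ) ((M : Matrix (Fin 3) (Fin 3) ℂ) i 1)) := by
  exact ⟨⟨Fequiv, cont_F, cont_G⟩, fun M t => rfl⟩
end

section
/- The space X = {(z,w) ∈ (ℂ³∖{0}) × (ℂ³∖{0}) : z·w = 0, ‖z‖² + ‖w‖² = 1}, with the subspace topology, is homotopy equivalent to the Lie group SU(3). -/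
section helpers

lemma sum_mul_star (z : C3) :
    z 0 * star (z 0) + z 1 * star (z 1) + z 2 * star (z 2) = ((‖z‖^2 : ℝ) : ℂ) := by
  have h : ‖z‖^2 = ∑ i, ‖z i‖^2 := by
    rw [EuclideanSpace.norm_eq, Real.sq_sqrt (by positivity)]
  rw [h, Fin.sum_univ_three]
  push_cast
  simp [Complex.star_def, Complex.mul_conj, Complex.normSq_eq_norm_sq]

noncomputable def crossC (a b : Fin 3 → ℂ) : Fin 3 → ℂ :=
  ![a 1 * b 2 - a 2 * b 1, a 2 * b 0 - a 0 * b 2, a 0 * b 1 - a 1 * b 0]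

noncomputable def mat (a b : Fin 3 → ℂ) : Matrix (Fin 3) (Fin 3) ℂ :=
  Matrix.of fun i => ![star (a i), b i, crossC a (fun k => star (b k)) i]

theorem mat_mem_SU3 (a b : Fin 3 → ℂ)
    (ha : a 0 * star (a 0) + a 1 * star (a 1) + a 2 * star (a 2) = 1)
    (hb : b 0 * star (b 0) + b 1 * star (b 1) + b 2 * star (b 2) = 1)
    (hab : a 0 * b 0 + a 1 * b 1 + a 2 * b 2 = 0) :
    mat a b ∈ Matrix.specialUnitaryGroup (Fin 3) ℂ := by
  have ha' := congrArg (starRingEnd ℂ) ha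
  have hb' := congrArg (starRingEnd ℂ) hb
  have hab' := congrArg (starRingEnd ℂ) hab
  simp only [map_add, map_mul, map_one, map_zero, Complex.star_def,
    Complex.conj_conj] at ha' hb' hab' ha hb
  rw [Matrix.mem_specialUnitaryGroup_iff]
  constructor
  · rw [Matrix.mem_unitaryGroup_iff']
    ext i j
    fin_cases i <;> fin_cases j <;>
      simp [Matrix.mul_apply, Fin.sum_univ_three, mat, crossC, Matrix.one_apply,
        Matrix.star_apply, Complex.star_def]
    all_goals try ring1
    all_goals first
      | linear_combination ha
      | linear_combination hab
      | linear_combination hab'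
      | linear_combination hb'
      | linear_combination
          (b 0 * (starRingEnd ℂ) (b 0) + b 1 * (starRingEnd ℂ) (b 1)
            + b 2 * (starRingEnd ℂ) (b 2)) * ha + hb
          - ((starRingEnd ℂ) (a 0) * (starRingEnd ℂ) (b 0)
            + (starRingEnd ℂ) (a 1) * (starRingEnd ℂ) (b 1)
            + (starRingEnd ℂ) (a 2) * (starRingEnd ℂ) (b 2)) * hab
  · rw [Matrix.det_fin_three]
    simp only [mat, crossC, Matrix.of_apply, Matrix.cons_val', Matrix.cons_val_zero,
      Matrix.empty_val', Matrix.cons_val_fin_one, Matrix.cons_val_one, Matrix.head_cons,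
      Matrix.head_fin_const, Matrix.cons_val_two, Matrix.tail_cons, Complex.star_def]
    linear_combination
      (b 0 * (starRingEnd ℂ) (b 0) + b 1 * (starRingEnd ℂ) (b 1)
        + b 2 * (starRingEnd ℂ) (b 2)) * ha + hb
      - ((starRingEnd ℂ) (a 0) * (starRingEnd ℂ) (b 0)
        + (starRingEnd ℂ) (a 1) * (starRingEnd ℂ) (b 1)
        + (starRingEnd ℂ) (a 2) * (starRingEnd ℂ) (b 2)) * hab

/-- normalization of a vector -/
noncomputable def nVec (z : C3) : Fin 3 → ℂ := fun i => z i / (‖z‖ : ℂ)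

lemma nVec_self (z : C3) (hz : z ≠ 0) :
    nVec z 0 * star (nVec z 0) + nVec z 1 * star (nVec z 1) + nVec z 2 * star (nVec z 2) = 1 := by
  have h0 : (‖z‖ : ℂ) ≠ 0 := Complex.ofReal_ne_zero.mpr (norm_ne_zero_iff.mpr hz)
  have hs := sum_mul_star z
  simp only [Complex.star_def] at hs
  simp only [nVec, Complex.star_def, map_div₀, Complex.conj_ofReal]
  field_simp
  push_cast at hs ⊢
  linear_combination hs

lemma nVec_dot (z w : C3) (hz : z ≠ 0) (hw : w ≠ 0) (h : dotProd z w = 0) :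
    nVec z 0 * nVec w 0 + nVec z 1 * nVec w 1 + nVec z 2 * nVec w 2 = 0 := by
  have h0 : (‖z‖ : ℂ) ≠ 0 := Complex.ofReal_ne_zero.mpr (norm_ne_zero_iff.mpr hz)
  have h1 : (‖w‖ : ℂ) ≠ 0 := Complex.ofReal_ne_zero.mpr (norm_ne_zero_iff.mpr hw)
  simp only [nVec, dotProd, Fin.sum_univ_three] at *
  field_simp
  linear_combination h

lemma fmat_mem (p : C3 × C3) (hp : p ∈ spaceX) :
    mat (nVec p.1) (nVec p.2) ∈ Matrix.specialUnitaryGroup (Fin 3) ℂ :=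
  mat_mem_SU3 _ _ (nVec_self _ hp.1) (nVec_self _ hp.2.1) (nVec_dot _ _ hp.1 hp.2.1 hp.2.2.1)

end helpers

section maps

lemma cont_coord (i : Fin 3) : Continuous fun z : C3 => z i :=
  (EuclideanSpace.proj i : C3 →L[ℂ] ℂ).continuous

noncomputable def fMap : C(spaceX, SU3) where
  toFun p := ⟨mat (nVec p.1.1) (nVec p.1.2), fmat_mem p.1 p.2⟩
  continuous_toFun := by
    apply Continuous.subtype_mk
    apply continuous_matrix
    intro i j
    have hz : ∀ p : spaceX, (‖(p : C3 × C3).1‖ : ℂ) ≠ 0 := fun p =>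
      Complex.ofReal_ne_zero.mpr (norm_ne_zero_iff.mpr p.2.1)
    have hw : ∀ p : spaceX, (‖(p : C3 × C3).2‖ : ℂ) ≠ 0 := fun p =>
      Complex.ofReal_ne_zero.mpr (norm_ne_zero_iff.mpr p.2.2.1)
    have c1 : ∀ k, Continuous fun p : spaceX => nVec (p : C3 × C3).1 k := by
      intro k
      exact ((cont_coord k).comp (continuous_fst.comp continuous_subtype_val)).div
        (Complex.continuous_ofReal.comp
          (continuous_norm.comp (continuous_fst.comp continuous_subtype_val))) hz
    have c2 : ∀ k, Continuous fun p : spaceX => nVec (p : C3 × C3).2 k := by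
      intro k
      exact ((cont_coord k).comp (continuous_snd.comp continuous_subtype_val)).div
        (Complex.continuous_ofReal.comp
          (continuous_norm.comp (continuous_snd.comp continuous_subtype_val))) hw
    fin_cases i <;> fin_cases j <;> simp [mat, crossC] <;>
      first
        | exact (c1 _).star
        | exact c2 _
        | exact Complex.continuous_conj.comp (c1 _)
        | exact ((c1 _).mul (c2 _).star).sub ((c1 _).mul (c2 _).star)
        | exact ((c1 _).mul (Complex.continuous_conj.comp (c2 _))).sub
            ((c1 _).mul (Complex.continuous_conj.comp (c2 _)))

end maps

section gmap

noncomputable def s2 : ℝ := (Real.sqrt 2)⁻¹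

lemma s2_pos : 0 < s2 := by
  rw [s2]; positivity

lemma s2_sq : s2 * s2 = 2⁻¹ := by
  rw [s2, ← mul_inv]
  norm_num [Real.mul_self_sqrt]

lemma s2_sq_c : (s2 : ℂ) * (s2 : ℂ) = 2⁻¹ := by
  rw [← Complex.ofReal_mul, s2_sq]
  norm_num

noncomputable def gVec (A : Matrix (Fin 3) (Fin 3) ℂ) : C3 × C3 :=
  (WithLp.toLp 2 (fun i => (s2 : ℂ) * star (A i 0) : Fin 3 → ℂ),
   WithLp.toLp 2 (fun i => (s2 : ℂ) * (A i 1) : Fin 3 → ℂ))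

lemma col_rel (A : Matrix (Fin 3) (Fin 3) ℂ) (hA : A ∈ Matrix.unitaryGroup (Fin 3) ℂ)
    (j k : Fin 3) :
    star (A 0 j) * A 0 k + star (A 1 j) * A 1 k + star (A 2 j) * A 2 k
      = if j = k then 1 else 0 := by
  have h := Matrix.mem_unitaryGroup_iff'.mp hA
  have := congrFun (congrFun h j) k
  simpa [Matrix.mul_apply, Fin.sum_univ_three, Matrix.one_apply, Matrix.star_apply,
    Matrix.conjTranspose_apply] using this

lemma gVec_fst_norm (A : Matrix (Fin 3) (Fin 3) ℂ) (hA : A ∈ Matrix.unitaryGroup (Fin 3) ℂ) :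
    ‖(gVec A).1‖^2 = 2⁻¹ := by
  have h := col_rel A hA 0 0
  norm_num [Complex.star_def] at h
  have hs := sum_mul_star (gVec A).1
  have key : ((‖(gVec A).1‖^2 : ℝ) : ℂ) = ((2⁻¹ : ℝ) : ℂ) := by
    rw [← hs]
    simp only [gVec, PiLp.toLp_apply, Complex.star_def, map_mul, Complex.conj_ofReal, Complex.conj_conj]
    push_cast
    linear_combination ((s2:ℂ) * (s2:ℂ)) * h + s2_sq_c
  exact_mod_cast key

lemma gVec_snd_norm (A : Matrix (Fin 3) (Fin 3) ℂ) (hA : A ∈ Matrix.unitaryGroup (Fin 3) ℂ) :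
    ‖(gVec A).2‖^2 = 2⁻¹ := by
  have h := col_rel A hA 1 1
  norm_num [Complex.star_def] at h
  have hs := sum_mul_star (gVec A).2
  have key : ((‖(gVec A).2‖^2 : ℝ) : ℂ) = ((2⁻¹ : ℝ) : ℂ) := by
    rw [← hs]
    simp only [gVec, PiLp.toLp_apply, Complex.star_def, map_mul, Complex.conj_ofReal, Complex.conj_conj]
    push_cast
    linear_combination ((s2:ℂ) * (s2:ℂ)) * h + s2_sq_c
  exact_mod_cast key

lemma gVec_mem (A : Matrix (Fin 3) (Fin 3) ℂ) (hA : A ∈ Matrix.unitaryGroup (Fin 3) ℂ) :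
    gVec A ∈ spaceX := by
  have h1 := gVec_fst_norm A hA
  have h2 := gVec_snd_norm A hA
  refine ⟨?_, ?_, ?_, ?_⟩
  · intro h
    rw [h] at h1; simp at h1
  · intro h
    rw [h] at h2; simp at h2
  · have h01 := col_rel A hA 0 1
    norm_num [Complex.star_def] at h01
    simp only [dotProd, Fin.sum_univ_three, gVec, PiLp.toLp_apply, Complex.star_def]
    linear_combination ((s2:ℂ) * (s2:ℂ)) * h01
  · rw [h1, h2]; norm_num

end gmap

noncomputable def gMap : C(SU3, spaceX) where
  toFun U := ⟨gVec U.1, gVec_mem U.1 ((Matrix.mem_specialUnitaryGroup_iff.mp U.2).1)⟩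
  continuous_toFun := by
    apply Continuous.subtype_mk
    have hcoord : ∀ (i j : Fin 3), Continuous fun U : SU3 => (U : Matrix (Fin 3) (Fin 3) ℂ) i j := by
      intro i j
      exact (continuous_subtype_val (p := (· ∈ SU3))).matrix_elem i j
    apply Continuous.prodMk
    · show Continuous fun U : SU3 =>
        WithLp.toLp 2 (fun i => (s2 : ℂ) * star ((U : Matrix (Fin 3) (Fin 3) ℂ) i 0))
      refine (PiLp.continuous_toLp (p := 2) (β := fun _ : Fin 3 => ℂ)).comp ?_
      apply continuous_pi
      intro i
      exact continuous_const.mul (hcoord i 0).star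
    · show Continuous fun U : SU3 =>
        WithLp.toLp 2 (fun i => (s2 : ℂ) * ((U : Matrix (Fin 3) (Fin 3) ℂ) i 1))
      refine (PiLp.continuous_toLp (p := 2) (β := fun _ : Fin 3 => ℂ)).comp ?_
      apply continuous_pi
      intro i
      exact continuous_const.mul (hcoord i 1)

-- the key identity: f (g U) = U
lemma fg_eq (U : SU3) : (fMap (gMap U) : Matrix (Fin 3) (Fin 3) ℂ) = U.1 := by
  obtain ⟨hU, hdet⟩ := Matrix.mem_specialUnitaryGroup_iff.mp U.2
  set A := (U : Matrix (Fin 3) (Fin 3) ℂ) with hA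
  have hsA : star A * A = 1 := Matrix.mem_unitaryGroup_iff'.mp hU
  have hAs : A * star A = 1 := Matrix.mem_unitaryGroup_iff.mp hU
  have hadj : A.adjugate = star A := by
    calc A.adjugate = A.adjugate * (A * star A) := by rw [hAs, mul_one]
    _ = (A.adjugate * A) * star A := by rw [mul_assoc]
    _ = star A := by rw [Matrix.adjugate_mul, hdet, one_smul, one_mul]
  -- norms of the two columns
  have hn1 : ‖(gVec A).1‖ = s2 := by
    have := gVec_fst_norm A hU
    have h2 : ‖(gVec A).1‖^2 = s2^2 := by rw [this, ← s2_sq]; ring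
    nlinarith [norm_nonneg (gVec A).1, s2_pos]
  have hn2 : ‖(gVec A).2‖ = s2 := by
    have := gVec_snd_norm A hU
    have h2 : ‖(gVec A).2‖^2 = s2^2 := by rw [this, ← s2_sq]; ring
    nlinarith [norm_nonneg (gVec A).2, s2_pos]
  have hs2c : (s2 : ℂ) ≠ 0 := Complex.ofReal_ne_zero.mpr (ne_of_gt s2_pos)
  -- normalized vectors
  have ha : nVec (gVec A).1 = fun i => star (A i 0) := by
    funext i
    simp only [nVec]
    rw [hn1]
    simp only [gVec, PiLp.toLp_apply]
    field_simp
  have hb : nVec (gVec A).2 = fun i => A i 1 := by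
    funext i
    simp only [nVec]
    rw [hn2]
    simp only [gVec, PiLp.toLp_apply]
    field_simp
  show mat (nVec (gVec A).1) (nVec (gVec A).2) = A
  rw [ha, hb]
  -- adjugate entries
  have hent : ∀ i j : Fin 3, A.adjugate i j = star (A j i) := by
    intro i j
    rw [hadj]
    rfl
  have e0 := hent 2 0
  have e1 := hent 2 1
  have e2 := hent 2 2
  rw [Matrix.adjugate_fin_three] at e0 e1 e2
  simp [Complex.star_def] at e0 e1 e2
  have e0' := congrArg (starRingEnd ℂ) e0
  have e1' := congrArg (starRingEnd ℂ) e1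
  have e2' := congrArg (starRingEnd ℂ) e2
  simp only [map_sub, map_add, map_neg, map_mul, Complex.conj_conj] at e0' e1' e2'
  ext i j
  fin_cases i <;> fin_cases j <;>
    simp [mat, crossC, Complex.star_def] <;>
    first
      | rfl
      | linear_combination e0'
      | linear_combination e1'
      | linear_combination e2'

section homotopy

noncomputable def sig (t u : ℝ) : ℝ := Real.sqrt ((1-t)*u^2 + t/2) / u

lemma q_pos {t u : ℝ} (ht0 : 0 ≤ t) (ht1 : t ≤ 1) (hu : 0 < u) : 0 < (1-t)*u^2 + t/2 := by
  rcases eq_or_lt_of_le ht0 with h|h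
  · rw [← h]; nlinarith [mul_pos hu hu]
  · have h1 : 0 ≤ (1-t)*u^2 := mul_nonneg (by linarith) (sq_nonneg u)
    linarith

lemma sig_pos {t u : ℝ} (ht0 : 0 ≤ t) (ht1 : t ≤ 1) (hu : 0 < u) : 0 < sig t u :=
  div_pos (Real.sqrt_pos.mpr (q_pos ht0 ht1 hu)) hu

lemma norm_smul_sig (t : ℝ) (ht0 : 0 ≤ t) (ht1 : t ≤ 1) (z : C3) (hz : z ≠ 0) :
    ‖sig t ‖z‖ • z‖^2 = (1-t)*‖z‖^2 + t/2 := by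
  have hu : 0 < ‖z‖ := norm_pos_iff.mpr hz
  rw [norm_smul, Real.norm_eq_abs, abs_of_pos (sig_pos ht0 ht1 hu), sig,
    div_mul_cancel₀ _ (ne_of_gt hu), Real.sq_sqrt (q_pos ht0 ht1 hu).le]

lemma hmem (t : ℝ) (ht0 : 0 ≤ t) (ht1 : t ≤ 1) (p : C3 × C3) (hp : p ∈ spaceX) :
    (sig t ‖p.1‖ • p.1, sig t ‖p.2‖ • p.2) ∈ spaceX := by
  obtain ⟨hz, hw, hd, hn⟩ := hp
  have hu : 0 < ‖p.1‖ := norm_pos_iff.mpr hz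
  have hv : 0 < ‖p.2‖ := norm_pos_iff.mpr hw
  refine ⟨smul_ne_zero (ne_of_gt (sig_pos ht0 ht1 hu)) hz,
    smul_ne_zero (ne_of_gt (sig_pos ht0 ht1 hv)) hw, ?_, ?_⟩
  · simp only [dotProd, Fin.sum_univ_three] at hd ⊢
    simp only [PiLp.smul_apply, Complex.real_smul]
    linear_combination ((sig t ‖p.1‖ : ℝ) : ℂ) * ((sig t ‖p.2‖ : ℝ) : ℂ) * hd
  · rw [norm_smul_sig t ht0 ht1 _ hz, norm_smul_sig t ht0 ht1 _ hw]
    linear_combination (1-t) * hn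

noncomputable def Hgf : ContinuousMap.Homotopy (gMap.comp fMap) (ContinuousMap.id spaceX) where
  toFun q := ⟨(sig (1 - q.1) ‖(q.2 : C3 × C3).1‖ • (q.2 : C3 × C3).1,
               sig (1 - q.1) ‖(q.2 : C3 × C3).2‖ • (q.2 : C3 × C3).2),
    hmem _ (by have := q.1.2.2; linarith) (by have := q.1.2.1; linarith) _ q.2.2⟩
  continuous_toFun := by
    apply Continuous.subtype_mk
    have ht : Continuous fun q : unitInterval × spaceX => (1 - (q.1:ℝ)) :=
      continuous_const.sub (continuous_induced_dom.comp continuous_fst)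
    have hz1 : Continuous fun q : unitInterval × spaceX => ((q.2 : C3 × C3)).1 :=
      continuous_fst.comp (continuous_subtype_val.comp continuous_snd)
    have hz2 : Continuous fun q : unitInterval × spaceX => ((q.2 : C3 × C3)).2 :=
      continuous_snd.comp (continuous_subtype_val.comp continuous_snd)
    have hs : ∀ (f : unitInterval × spaceX → C3), Continuous f → (∀ q, f q ≠ 0) →
        Continuous fun q => sig (1 - (q.1:ℝ)) ‖f q‖ := by
      intro f hf hne
      unfold sig
      apply Continuous.div
      · apply Real.continuous_sqrt.comp
        exact ((continuous_const.sub ht).mul ((hf.norm).pow 2)).add (ht.div_const 2)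
      · exact hf.norm
      · exact fun q => ne_of_gt (norm_pos_iff.mpr (hne q))
    exact ((hs _ hz1 fun q => q.2.2.1).smul hz1).prodMk
      ((hs _ hz2 fun q => q.2.2.2.1).smul hz2)
  map_zero_left p := by
    have hsig : ∀ z : C3, z ≠ 0 → sig (1 - ((0:unitInterval):ℝ)) ‖z‖ = s2 / ‖z‖ := by
      intro z hz
      simp only [Set.Icc.coe_zero, sub_zero, sig]
      rw [show (1-(1:ℝ))*‖z‖^2 + 1/2 = 2⁻¹ by ring, Real.sqrt_inv]
      rfl
    have hz := p.2.1
    have hw := p.2.2.1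
    have hu : ‖(p : C3 × C3).1‖ ≠ 0 := norm_ne_zero_iff.mpr hz
    have hv : ‖(p : C3 × C3).2‖ ≠ 0 := norm_ne_zero_iff.mpr hw
    apply Subtype.ext
    show (_, _) = gVec (mat (nVec (p : C3 × C3).1) (nVec (p : C3 × C3).2))
    rw [hsig _ hz, hsig _ hw]
    refine Prod.ext ?_ ?_ <;> ext i <;>
      simp only [gVec, PiLp.toLp_apply, mat, nVec, crossC, Matrix.of_apply, Matrix.cons_val_zero,
        Matrix.cons_val_one, Matrix.head_cons, PiLp.smul_apply, Complex.real_smul,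
        star_star, Complex.ofReal_div] <;>
      field_simp <;> ring
  map_one_left p := by
    have h1 : ∀ z : C3, z ≠ 0 → sig (1 - ((1:unitInterval):ℝ)) ‖z‖ = 1 := by
      intro z hz
      have hu : 0 < ‖z‖ := norm_pos_iff.mpr hz
      simp only [Set.Icc.coe_one, sub_self, sig]
      rw [show (1-(0:ℝ))*‖z‖^2 + 0/2 = ‖z‖^2 by ring, Real.sqrt_sq hu.le,
        div_self (ne_of_gt hu)]
    apply Subtype.ext
    show (_, _) = (p : C3 × C3)
    rw [h1 _ p.2.1, h1 _ p.2.2.1, one_smul, one_smul]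

end homotopy

theorem X_homotopyEquiv_SU3 :
    Nonempty (ContinuousMap.HomotopyEquiv spaceX SU3) := by
  refine ⟨⟨fMap, gMap, ⟨Hgf⟩, ?_⟩⟩
  have h : fMap.comp gMap = ContinuousMap.id SU3 :=
    ContinuousMap.ext fun U => Subtype.ext (fg_eq U)
  rw [h]
end

section
/- For any real numbers a > 0 and b > 0, the space {(z,w) ∈ ℂ³ × ℂ³ : z·w = 0, ‖z‖² = a, ‖w‖² = b}, with the subspace topology, is homeomorphic to SU(3). -/
local notation "conj'" => starRingEnd ℂ

private lemma c3_normsq (z : C3) : ((‖z‖^2 : ℝ) : ℂ) = ∑ i, conj' (z i) * z i := by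
  have h := inner_self_eq_norm_sq_to_K (𝕜 := ℂ) (E := C3) z
  rw [PiLp.inner_apply] at h
  simp only [RCLike.inner_apply] at h
  rw [Finset.sum_congr rfl fun i _ => mul_comm (conj' (z i)) (z i), h]; norm_cast

/-- matrix with columns `u`, `v`, `conj (u × v)` -/
private def matUV (u v : Fin 3 → ℂ) : Matrix (Fin 3) (Fin 3) ℂ :=
  !![u 0, v 0, conj' (u 1 * v 2 - u 2 * v 1);
     u 1, v 1, conj' (u 2 * v 0 - u 0 * v 2);
     u 2, v 2, conj' (u 0 * v 1 - u 1 * v 0)]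

private lemma matUV_mem (u v : Fin 3 → ℂ)
    (hu : ∑ i, conj' (u i) * u i = 1)
    (hv : ∑ i, conj' (v i) * v i = 1)
    (huv : ∑ i, conj' (u i) * v i = 0) :
    matUV u v ∈ Matrix.specialUnitaryGroup (Fin 3) ℂ := by
  have hvu : ∑ i, conj' (v i) * u i = 0 := by
    have := congrArg conj' huv
    simpa [map_sum, mul_comm, Fin.sum_univ_three] using this
  rw [Fin.sum_univ_three] at hu hv huv hvu
  rw [Matrix.mem_specialUnitaryGroup_iff]
  constructor
  · rw [Matrix.mem_unitaryGroup_iff']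
    ext i j
    fin_cases i <;> fin_cases j <;>
      simp [Matrix.mul_apply, Fin.sum_univ_three, matUV, Matrix.one_apply, star_sub, star_mul'] <;>
      first
      | linear_combination hu
      | linear_combination hv
      | linear_combination huv
      | linear_combination hvu
      | ring1
      | linear_combination ((conj' (v 0) * v 0 + conj' (v 1) * v 1 + conj' (v 2) * v 2) * hu + hv - (u 0 * conj' (v 0) + u 1 * conj' (v 1) + u 2 * conj' (v 2)) * huv)
  · rw [Matrix.det_fin_three]
    simp only [matUV, Matrix.cons_val', Matrix.cons_val_zero, Matrix.cons_val_one,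
      Matrix.head_cons, Matrix.head_fin_const, Matrix.empty_val', Matrix.cons_val_fin_one,
      Matrix.of_apply, Matrix.cons_val_two, Matrix.tail_cons, map_sub, _root_.map_mul]
    linear_combination ((conj' (v 0) * v 0 + conj' (v 1) * v 1 + conj' (v 2) * v 2) * hu + hv - (u 0 * conj' (v 0) + u 1 * conj' (v 1) + u 2 * conj' (v 2)) * huv)

private lemma su3_star_eq_adjugate (g : Matrix (Fin 3) (Fin 3) ℂ)
    (hg : g ∈ Matrix.specialUnitaryGroup (Fin 3) ℂ) : star g = g.adjugate := by
  rw [Matrix.mem_specialUnitaryGroup_iff] at hg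
  obtain ⟨hu, hd⟩ := hg
  rw [Matrix.mem_unitaryGroup_iff'] at hu
  have h1 : g⁻¹ = star g := Matrix.inv_eq_left_inv hu
  have h2 : g⁻¹ = g.adjugate := by rw [Matrix.inv_def, hd]; simp
  rw [← h1, h2]

private lemma su3_col2 (g : Matrix (Fin 3) (Fin 3) ℂ)
    (hg : g ∈ Matrix.specialUnitaryGroup (Fin 3) ℂ) :
    g 0 2 = conj' (g 1 0 * g 2 1 - g 2 0 * g 1 1) ∧
    g 1 2 = conj' (g 2 0 * g 0 1 - g 0 0 * g 2 1) ∧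
    g 2 2 = conj' (g 0 0 * g 1 1 - g 1 0 * g 0 1) := by
  have h := su3_star_eq_adjugate g hg
  refine ⟨?_, ?_, ?_⟩
  · have := congrFun (congrFun h 2) 0
    rw [Matrix.adjugate_fin_three] at this
    simp [Matrix.star_apply] at this
    rw [← Complex.conj_conj (g 0 2), this]
    simp only [map_add, map_sub, map_neg, _root_.map_mul]
    ring
  · have := congrFun (congrFun h 2) 1
    rw [Matrix.adjugate_fin_three] at this
    simp [Matrix.star_apply] at this
    rw [← Complex.conj_conj (g 1 2), this]
    simp only [map_add, map_sub, map_neg, _root_.map_mul]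
    ring
  · have := congrFun (congrFun h 2) 2
    rw [Matrix.adjugate_fin_three] at this
    simp [Matrix.star_apply] at this
    rw [← Complex.conj_conj (g 2 2), this]
    simp only [map_add, map_sub, map_neg, _root_.map_mul]
    ring

/-- orthonormality of columns of a special unitary matrix -/
private lemma su3_cols (g : Matrix (Fin 3) (Fin 3) ℂ)
    (hg : g ∈ Matrix.specialUnitaryGroup (Fin 3) ℂ) (j k : Fin 3) :
    ∑ i, conj' (g i j) * g i k = if j = k then 1 else 0 := by
  rw [Matrix.mem_specialUnitaryGroup_iff] at hg
  have hu := hg.1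
  rw [Matrix.mem_unitaryGroup_iff'] at hu
  have := congrFun (congrFun hu j) k
  simpa [Matrix.mul_apply, Matrix.star_apply, Matrix.one_apply] using this

/-- the map from the torus slice to matrices -/
private noncomputable def toSU (sa sb : ℝ) (p : C3 × C3) : Matrix (Fin 3) (Fin 3) ℂ :=
  matUV (fun i => conj' (p.1 i) / (sa : ℂ)) (fun i => p.2 i / (sb : ℂ))

/-- the map from matrices to the torus slice -/
private noncomputable def fromSU (sa sb : ℝ) (g : Matrix (Fin 3) (Fin 3) ℂ) : C3 × C3 :=
  ((WithLp.equiv 2 (Fin 3 → ℂ)).symm fun i => (sa : ℂ) * conj' (g i 0),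
   (WithLp.equiv 2 (Fin 3 → ℂ)).symm fun i => (sb : ℂ) * g i 1)

private lemma toSU_mem (sa sb : ℝ) (hsa : 0 < sa) (hsb : 0 < sb) (p : C3 × C3)
    (hd : dotProd p.1 p.2 = 0) (h1 : ‖p.1‖ ^ 2 = sa * sa) (h2 : ‖p.2‖ ^ 2 = sb * sb) :
    toSU sa sb p ∈ Matrix.specialUnitaryGroup (Fin 3) ℂ := by
  have hsa0 : (sa : ℂ) ≠ 0 := by exact_mod_cast hsa.ne'
  have hsb0 : (sb : ℂ) ≠ 0 := by exact_mod_cast hsb.ne'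
  have hz : ∑ i, conj' (p.1 i) * p.1 i = (sa : ℂ) * (sa : ℂ) := by
    rw [← c3_normsq, h1]; push_cast; ring
  have hw : ∑ i, conj' (p.2 i) * p.2 i = (sb : ℂ) * (sb : ℂ) := by
    rw [← c3_normsq, h2]; push_cast; ring
  have hd' : ∑ i, p.1 i * p.2 i = 0 := hd
  rw [Fin.sum_univ_three] at hz hw hd'
  apply matUV_mem
  · simp only [map_div₀, Complex.conj_conj, Complex.conj_ofReal, Fin.sum_univ_three]
    field_simp
    linear_combination hz
  · simp only [map_div₀, Complex.conj_ofReal, Fin.sum_univ_three]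
    field_simp
    linear_combination hw
  · simp only [map_div₀, Complex.conj_conj, Complex.conj_ofReal, Fin.sum_univ_three]
    field_simp
    linear_combination hd'

private lemma fromSU_mem (sa sb : ℝ) (g : Matrix (Fin 3) (Fin 3) ℂ)
    (hg : g ∈ Matrix.specialUnitaryGroup (Fin 3) ℂ) :
    dotProd (fromSU sa sb g).1 (fromSU sa sb g).2 = 0 ∧
    ‖(fromSU sa sb g).1‖ ^ 2 = sa * sa ∧ ‖(fromSU sa sb g).2‖ ^ 2 = sb * sb := by
  have h00 := su3_cols g hg 0 0
  have h01 := su3_cols g hg 0 1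
  have h11 := su3_cols g hg 1 1
  norm_num [Fin.sum_univ_three] at h00 h01 h11
  refine ⟨?_, ?_, ?_⟩
  · simp only [dotProd, fromSU, WithLp.equiv_symm_apply, PiLp.toLp_apply, Fin.sum_univ_three]
    linear_combination ((sa : ℂ) * (sb : ℂ)) * h01
  · apply Complex.ofReal_injective
    rw [c3_normsq]
    simp only [fromSU, WithLp.equiv_symm_apply, PiLp.toLp_apply, Fin.sum_univ_three, _root_.map_mul,
      Complex.conj_conj, Complex.conj_ofReal]
    push_cast
    linear_combination ((sa : ℂ) * (sa : ℂ)) * h00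
  · apply Complex.ofReal_injective
    rw [c3_normsq]
    simp only [fromSU, WithLp.equiv_symm_apply, PiLp.toLp_apply, Fin.sum_univ_three, _root_.map_mul,
      Complex.conj_conj, Complex.conj_ofReal]
    push_cast
    linear_combination ((sb : ℂ) * (sb : ℂ)) * h11

private lemma fromSU_toSU (sa sb : ℝ) (hsa : 0 < sa) (hsb : 0 < sb) (p : C3 × C3) :
    fromSU sa sb (toSU sa sb p) = p := by
  have hsa0 : (sa : ℂ) ≠ 0 := by exact_mod_cast hsa.ne'
  have hsb0 : (sb : ℂ) ≠ 0 := by exact_mod_cast hsb.ne'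
  refine Prod.ext ?_ ?_
  · show (WithLp.equiv 2 (Fin 3 → ℂ)).symm _ = p.1
    ext i
    simp only [WithLp.equiv_symm_apply, PiLp.toLp_apply]
    fin_cases i <;>
      · simp [toSU, matUV, map_div₀, Complex.conj_conj, Complex.conj_ofReal]
        field_simp
  · show (WithLp.equiv 2 (Fin 3 → ℂ)).symm _ = p.2
    ext i
    simp only [WithLp.equiv_symm_apply, PiLp.toLp_apply]
    fin_cases i <;>
      · simp [toSU, matUV, map_div₀, Complex.conj_conj, Complex.conj_ofReal]
        field_simp
        try ring

private lemma toSU_fromSU (sa sb : ℝ) (hsa : 0 < sa) (hsb : 0 < sb)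
    (g : Matrix (Fin 3) (Fin 3) ℂ) (hg : g ∈ Matrix.specialUnitaryGroup (Fin 3) ℂ) :
    toSU sa sb (fromSU sa sb g) = g := by
  have hsa0 : (sa : ℂ) ≠ 0 := by exact_mod_cast hsa.ne'
  have hsb0 : (sb : ℂ) ≠ 0 := by exact_mod_cast hsb.ne'
  obtain ⟨e0, e1, e2⟩ := su3_col2 g hg
  have e0' : conj' (g 1 0) * conj' (g 2 1) - conj' (g 2 0) * conj' (g 1 1) = g 0 2 := by
    rw [e0]; simp only [map_sub, _root_.map_mul]
  have e1' : conj' (g 2 0) * conj' (g 0 1) - conj' (g 0 0) * conj' (g 2 1) = g 1 2 := by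
    rw [e1]; simp only [map_sub, _root_.map_mul]
  have e2' : conj' (g 0 0) * conj' (g 1 1) - conj' (g 1 0) * conj' (g 0 1) = g 2 2 := by
    rw [e2]; simp only [map_sub, _root_.map_mul]
  ext i j
  fin_cases i <;> fin_cases j <;>
    simp only [toSU, fromSU, matUV, WithLp.equiv_symm_apply, PiLp.toLp_apply, Matrix.cons_val',
      Matrix.cons_val_zero, Matrix.cons_val_one, Matrix.head_cons, Matrix.empty_val',
      Matrix.cons_val_fin_one, Matrix.of_apply, Matrix.cons_val_two, Matrix.tail_cons,
      map_div₀, _root_.map_mul, map_sub, Complex.conj_conj, Complex.conj_ofReal] <;>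
    first
      | exact rfl
      | exact e0'
      | exact e1'
      | exact e2'
      | (field_simp; try (first | rfl | exact e0' | exact e1' | exact e2' | ring1 | (simp; linear_combination e1') | (simp; linear_combination e2')))

private lemma toSU_continuous (sa sb : ℝ) : Continuous (toSU sa sb) := by
  apply continuous_matrix
  intro i j
  have hz : ∀ k : Fin 3, Continuous fun p : C3 × C3 => (p.1 k : ℂ) :=
    fun k => (continuous_apply k).comp ((PiLp.continuous_ofLp 2 _).comp continuous_fst)
  have hw : ∀ k : Fin 3, Continuous fun p : C3 × C3 => (p.2 k : ℂ) :=
    fun k => (continuous_apply k).comp ((PiLp.continuous_ofLp 2 _).comp continuous_snd)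
  have cu : ∀ k : Fin 3, Continuous fun p : C3 × C3 => conj' (p.1 k) / (sa : ℂ) :=
    fun k => (continuous_star.comp (hz k)).div_const _
  have cv : ∀ k : Fin 3, Continuous fun p : C3 × C3 => p.2 k / (sb : ℂ) :=
    fun k => (hw k).div_const _
  have cw : ∀ k l k' l' : Fin 3, Continuous fun p : C3 × C3 =>
      conj' ((conj' (p.1 k) / (sa : ℂ)) * (p.2 l / (sb : ℂ))
        - (conj' (p.1 k') / (sa : ℂ)) * (p.2 l' / (sb : ℂ))) :=
    fun k l k' l' => continuous_star.comp (((cu k).mul (cv l)).sub ((cu k').mul (cv l')))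
  fin_cases i <;> fin_cases j <;>
    first
    | exact cu 0 | exact cu 1 | exact cu 2
    | exact cv 0 | exact cv 1 | exact cv 2
    | exact cw 1 2 2 1 | exact cw 2 0 0 2 | exact cw 0 1 1 0

private lemma fromSU_continuous (sa sb : ℝ) : Continuous (fromSU sa sb) := by
  have hentry : ∀ k l : Fin 3,
      Continuous fun g : Matrix (Fin 3) (Fin 3) ℂ => g k l :=
    fun k l => (continuous_apply l).comp (continuous_apply k)
  apply Continuous.prodMk
  · exact (PiLp.continuous_toLp 2 (fun _ : Fin 3 => ℂ)).comp
      (continuous_pi fun i =>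
        continuous_const.mul (continuous_star.comp (hentry i 0)))
  · exact (PiLp.continuous_toLp 2 (fun _ : Fin 3 => ℂ)).comp
      (continuous_pi fun i => continuous_const.mul (hentry i 1))

theorem torus_slice_homeomorph_SU3 (a b : ℝ) (ha : 0 < a) (hb : 0 < b) :
    Nonempty
      (({p : C3 × C3 | dotProd p.1 p.2 = 0 ∧ ‖p.1‖ ^ 2 = a ∧ ‖p.2‖ ^ 2 = b} : Set (C3 × C3))
        ≃ₜ SU3) := by
  have hsa : (0:ℝ) < Real.sqrt a := Real.sqrt_pos.2 ha
  have hsb : (0:ℝ) < Real.sqrt b := Real.sqrt_pos.2 hb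
  have haa : Real.sqrt a * Real.sqrt a = a := Real.mul_self_sqrt ha.le
  have hbb : Real.sqrt b * Real.sqrt b = b := Real.mul_self_sqrt hb.le
  refine ⟨Homeomorph.mk (Equiv.mk
    (fun p => ⟨toSU (Real.sqrt a) (Real.sqrt b) p.val,
      toSU_mem _ _ hsa hsb p.val p.prop.1 (by rw [p.prop.2.1, haa]) (by rw [p.prop.2.2, hbb])⟩)
    (fun g => ⟨fromSU (Real.sqrt a) (Real.sqrt b) g.val, by
      obtain ⟨c1, c2, c3⟩ := fromSU_mem (Real.sqrt a) (Real.sqrt b) g.val g.prop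
      exact ⟨c1, by rw [c2, haa], by rw [c3, hbb]⟩⟩)
    ?_ ?_) ?_ ?_⟩
  · intro p
    exact Subtype.ext (fromSU_toSU _ _ hsa hsb p.val)
  · intro g
    exact Subtype.ext (toSU_fromSU _ _ hsa hsb g.val g.prop)
  · exact ((toSU_continuous _ _).comp continuous_subtype_val).subtype_mk _
  · exact ((fromSU_continuous _ _).comp continuous_subtype_val).subtype_mk _
end

section
/- For every real ε with 0 < ε < 1/2, the space W ∩ X = {(z,w) ∈ (ℂ³∖{0}) × (ℂ³∖{0}) : z·w = 0, ‖z‖² + ‖w‖² = 1, and (‖z‖² < ε or ‖w‖² < ε)}, with the subspace topology, is homotopy equivalent to the disjoint union of two copies of SU(3). -/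
/-- The intersection `W ∩ X`, depending on `ε`. -/
def spaceWX (ε : ℝ) : Set (C3 × C3) :=
  {p | p.1 ≠ 0 ∧ p.2 ≠ 0 ∧ dotProd p.1 p.2 = 0 ∧ ‖p.1‖ ^ 2 + ‖p.2‖ ^ 2 = 1 ∧
    (‖p.1‖ ^ 2 < ε ∨ ‖p.2‖ ^ 2 < ε)}

namespace WXProof

open Complex Matrix ContinuousMap unitInterval

/-! ### Vectors in `C3` -/

noncomputable def mk3 (a b c : ℂ) : C3 := (EuclideanSpace.equiv (Fin 3) ℂ).symm ![a,b,c]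
@[simp] lemma mk3_zero (a b c : ℂ) : mk3 a b c 0 = a := rfl
@[simp] lemma mk3_one (a b c : ℂ) : mk3 a b c 1 = b := rfl
@[simp] lemma mk3_two (a b c : ℂ) : mk3 a b c 2 = c := rfl

lemma continuous_mk3 {X : Type*} [TopologicalSpace X] {a b c : X → ℂ}
    (ha : Continuous a) (hb : Continuous b) (hc : Continuous c) :
    Continuous fun x => mk3 (a x) (b x) (c x) := by
  refine ((EuclideanSpace.equiv (Fin 3) ℂ).symm.continuous).comp ?_
  refine continuous_pi fun i => ?_
  fin_cases i <;> simpa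

/-- Coordinatewise complex conjugation. -/
noncomputable def conj3 (z : C3) : C3 :=
  (EuclideanSpace.equiv (Fin 3) ℂ).symm fun i => (starRingEnd ℂ) (z i)
@[simp] lemma conj3_apply (z : C3) (i : Fin 3) : conj3 z i = (starRingEnd ℂ) (z i) := rfl

lemma conj3_conj3 (z : C3) : conj3 (conj3 z) = z := by
  ext i; simp

lemma continuous_conj3 : Continuous conj3 := by
  refine ((EuclideanSpace.equiv (Fin 3) ℂ).symm.continuous).comp ?_
  exact continuous_pi fun i => Complex.continuous_conj.comp ((EuclideanSpace.proj i).continuous)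

lemma norm_conj3 (z : C3) : ‖conj3 z‖ = ‖z‖ := by
  simp [EuclideanSpace.norm_eq]

lemma sum_conj_mul (z : C3) : ∑ i, (starRingEnd ℂ) (z i) * z i = (‖z‖:ℂ)^2 := by
  have h := inner_self_eq_norm_sq_to_K (𝕜 := ℂ) z
  rw [PiLp.inner_apply] at h
  simpa [RCLike.inner_apply, Complex.conj_mul'] using h

lemma norm_eq_one_of (z : C3) (h : ∑ i, (starRingEnd ℂ) (z i) * z i = 1) : ‖z‖ = 1 := by
  have h2 : (‖z‖:ℂ)^2 = 1 := by rw [← sum_conj_mul]; exact h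
  have h3 : (‖z‖:ℝ)^2 = 1 := by
    have := h2
    rw [show ((‖z‖:ℝ):ℂ)^2 = (((‖z‖^2 : ℝ)):ℂ) by push_cast; ring] at this
    exact_mod_cast this
  nlinarith [norm_nonneg z]

/-- The normalization `z ↦ z/‖z‖`. -/
noncomputable def unitz (z : C3) : C3 := ‖z‖⁻¹ • z

lemma norm_unitz (z : C3) (hz : z ≠ 0) : ‖unitz z‖ = 1 := by
  have h : ‖z‖ ≠ 0 := norm_ne_zero_iff.mpr hz
  rw [unitz, norm_smul]
  simp [_root_.abs_of_nonneg (inv_nonneg.mpr (norm_nonneg z))]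
  field_simp

lemma unitz_smul (c : C3) (hc : ‖c‖ = 1) (r : ℝ) (hr : 0 < r) : unitz (r • c) = c := by
  rw [unitz, norm_smul, Real.norm_eq_abs, _root_.abs_of_pos hr, hc, mul_one, smul_smul,
    inv_mul_cancel₀ (ne_of_gt hr), one_smul]

lemma smul_unitz_self (z : C3) (hz : z ≠ 0) : ‖z‖ • unitz z = z := by
  rw [unitz, smul_smul, mul_inv_cancel₀ (norm_ne_zero_iff.mpr hz), one_smul]

lemma norm_smul_unitz (z : C3) (hz : z ≠ 0) (c : ℝ) (hc : 0 ≤ c) : ‖c • unitz z‖ = c := by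
  rw [norm_smul, Real.norm_eq_abs, _root_.abs_of_nonneg hc, norm_unitz z hz, mul_one]

/-! ### dotProd lemmas -/

lemma dotProd_comm (z w : C3) : dotProd z w = dotProd w z := by
  simp [dotProd, mul_comm]

lemma dotProd_smul_left (r : ℝ) (z w : C3) : dotProd (r • z) w = (r:ℂ) * dotProd z w := by
  simp [dotProd, Finset.mul_sum, PiLp.smul_apply, Complex.real_smul, mul_assoc]

lemma dotProd_smul_right (r : ℝ) (z w : C3) : dotProd z (r • w) = (r:ℂ) * dotProd z w := by
  rw [dotProd_comm, dotProd_smul_left, dotProd_comm]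

lemma dotProd_unitz (z w : C3) (h : dotProd z w = 0) : dotProd (unitz z) (unitz w) = 0 := by
  rw [unitz, unitz, dotProd_smul_left, dotProd_smul_right, h, mul_zero, mul_zero]

/-! ### The cross-product matrix -/

noncomputable def cross (u v : C3) : C3 :=
  mk3 (u 1 * v 2 - u 2 * v 1) (u 2 * v 0 - u 0 * v 2) (u 0 * v 1 - u 1 * v 0)

noncomputable def matOf (u v : C3) : Matrix (Fin 3) (Fin 3) ℂ :=
  !![u 0, v 0, (starRingEnd ℂ) (cross u v 0);
     u 1, v 1, (starRingEnd ℂ) (cross u v 1);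
     u 2, v 2, (starRingEnd ℂ) (cross u v 2)]

lemma vecCons_two_aux (a b c : ℂ) :
    @Matrix.vecCons ℂ 2 a (fun i => @Matrix.vecCons ℂ 1 b (fun _ => c) i) (2 : Fin 3) = c := rfl

lemma matOf_mem (u v : C3)
    (hu : ∑ i, (starRingEnd ℂ) (u i) * u i = 1)
    (hv : ∑ i, (starRingEnd ℂ) (v i) * v i = 1)
    (huv : ∑ i, (starRingEnd ℂ) (u i) * v i = 0) :
    matOf u v ∈ SU3 := by
  have hvu : ∑ i, (starRingEnd ℂ) (v i) * u i = 0 := by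
    have := congrArg (starRingEnd ℂ) huv
    simpa [map_sum, mul_comm] using this
  rw [Fin.sum_univ_three] at hu hv huv hvu
  rw [Matrix.mem_specialUnitaryGroup_iff]
  refine ⟨?_, ?_⟩
  · rw [Matrix.mem_unitaryGroup_iff']
    ext i j
    fin_cases i <;> fin_cases j <;>
      simp only [Matrix.mul_apply, Fin.sum_univ_three, Matrix.star_apply, RCLike.star_def,
        matOf, cross, Matrix.cons_val', Matrix.cons_val_zero, Matrix.cons_val_one,
        Matrix.head_cons, Matrix.empty_val', Matrix.cons_val_fin_one, Matrix.head_fin_const,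
        mk3_zero, mk3_one, mk3_two, map_sub, _root_.map_mul, Complex.conj_conj,
        Matrix.one_apply, Fin.mk.injEq] <;>
      norm_num [vecCons_two_aux]
    · linear_combination hu
    · linear_combination huv
    · ring
    · linear_combination hvu
    · linear_combination hv
    · ring
    · ring
    · ring
    · linear_combination ((starRingEnd ℂ) (v 0) * v 0 + (starRingEnd ℂ) (v 1) * v 1 +
        (starRingEnd ℂ) (v 2) * v 2) * hu + hv - ((starRingEnd ℂ) (v 0) * u 0 +
        (starRingEnd ℂ) (v 1) * u 1 + (starRingEnd ℂ) (v 2) * u 2) * huv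
  · rw [Matrix.det_fin_three]
    simp [matOf, cross, map_sub, _root_.map_mul]
    linear_combination ((starRingEnd ℂ) (v 0) * v 0 + (starRingEnd ℂ) (v 1) * v 1 +
        (starRingEnd ℂ) (v 2) * v 2) * hu + hv - ((starRingEnd ℂ) (v 0) * u 0 +
        (starRingEnd ℂ) (v 1) * u 1 + (starRingEnd ℂ) (v 2) * u 2) * huv

noncomputable def colv (U : Matrix (Fin 3) (Fin 3) ℂ) (j : Fin 3) : C3 :=
  mk3 (U 0 j) (U 1 j) (U 2 j)

@[simp] lemma colv_matOf_zero (u v : C3) : colv (matOf u v) 0 = u := by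
  ext i; fin_cases i <;> rfl

@[simp] lemma colv_matOf_one (u v : C3) : colv (matOf u v) 1 = v := by
  ext i; fin_cases i <;> rfl

lemma matOf_col (U : Matrix (Fin 3) (Fin 3) ℂ) (hU : U ∈ SU3) :
    matOf (colv U 0) (colv U 1) = U := by
  obtain ⟨hunit, hdet⟩ := Matrix.mem_specialUnitaryGroup_iff.mp hU
  rw [Matrix.mem_unitaryGroup_iff'] at hunit
  have hinv1 : U⁻¹ = star U := Matrix.inv_eq_left_inv hunit
  have hinv2 : U⁻¹ = U.adjugate :=
    Matrix.inv_eq_left_inv (by rw [Matrix.adjugate_mul, hdet, one_smul])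
  have hstar : star U = U.adjugate := hinv1 ▸ hinv2
  have key : ∀ i : Fin 3, (starRingEnd ℂ) (U i 2) = U.adjugate 2 i := by
    intro i
    have := congrFun (congrFun hstar 2) i
    simpa [Matrix.star_apply, RCLike.star_def] using this
  have key3 : ∀ i : Fin 3, U i 2 = (starRingEnd ℂ) (U.adjugate 2 i) := by
    intro i
    have := congrArg (starRingEnd ℂ) (key i)
    simpa [Complex.conj_conj] using this
  rw [Matrix.adjugate_fin_three] at key3
  have k0 := key3 0
  have k1 := key3 1
  have k2 := key3 2
  simp [map_sub, _root_.map_mul, map_add, map_neg] at k0 k1 k2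
  ext i j
  fin_cases i <;> fin_cases j <;>
    simp [matOf, cross, colv, map_sub, _root_.map_mul]
  · linear_combination -k0
  · linear_combination -k1
  · linear_combination -k2

lemma colv_facts (U : Matrix (Fin 3) (Fin 3) ℂ) (hU : U ∈ SU3) :
    (∑ k, (starRingEnd ℂ) (colv U 0 k) * colv U 0 k = 1) ∧
    (∑ k, (starRingEnd ℂ) (colv U 1 k) * colv U 1 k = 1) ∧
    (∑ k, (starRingEnd ℂ) (colv U 0 k) * colv U 1 k = 0) := by
  have h := Matrix.mem_unitaryGroup_iff'.mp (Matrix.mem_specialUnitaryGroup_iff.mp hU).1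
  refine ⟨?_, ?_, ?_⟩
  · have := congrFun (congrFun h 0) 0
    simpa [Matrix.mul_apply, Fin.sum_univ_three, Matrix.star_apply, RCLike.star_def,
      Matrix.one_apply, colv] using this
  · have := congrFun (congrFun h 1) 1
    simpa [Matrix.mul_apply, Fin.sum_univ_three, Matrix.star_apply, RCLike.star_def,
      Matrix.one_apply, colv] using this
  · have := congrFun (congrFun h 0) 1
    simpa [Matrix.mul_apply, Fin.sum_univ_three, Matrix.star_apply, RCLike.star_def,
      Matrix.one_apply, colv] using this

lemma continuous_matOf {X : Type*} [TopologicalSpace X] {u v : X → C3}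
    (hu : Continuous u) (hv : Continuous v) :
    Continuous fun x => matOf (u x) (v x) := by
  have hU : ∀ i, Continuous fun x => u x i :=
    fun i => ((EuclideanSpace.proj (𝕜 := ℂ) i).continuous).comp hu
  have hV : ∀ i, Continuous fun x => v x i :=
    fun i => ((EuclideanSpace.proj (𝕜 := ℂ) i).continuous).comp hv
  refine continuous_matrix ?_
  intro i j
  fin_cases i <;> fin_cases j <;>
    simp only [matOf, cross, Matrix.cons_val', Matrix.cons_val_zero, Matrix.cons_val_one,
      Matrix.head_cons, Matrix.empty_val', Matrix.cons_val_fin_one, Matrix.head_fin_const,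
      mk3_zero, mk3_one, mk3_two, map_sub, _root_.map_mul]
  · exact hU 0
  · exact hV 0
  · exact ((Complex.continuous_conj.comp (hU 1)).mul (Complex.continuous_conj.comp (hV 2))).sub
      ((Complex.continuous_conj.comp (hU 2)).mul (Complex.continuous_conj.comp (hV 1)))
  · exact hU 1
  · exact hV 1
  · exact ((Complex.continuous_conj.comp (hU 2)).mul (Complex.continuous_conj.comp (hV 0))).sub
      ((Complex.continuous_conj.comp (hU 0)).mul (Complex.continuous_conj.comp (hV 2)))
  · exact hU 2
  · exact hV 2
  · exact ((Complex.continuous_conj.comp (hU 0)).mul (Complex.continuous_conj.comp (hV 1))).sub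
      ((Complex.continuous_conj.comp (hU 1)).mul (Complex.continuous_conj.comp (hV 0)))

lemma continuous_colv (j : Fin 3) : Continuous fun U : SU3 => colv (U : Matrix (Fin 3) (Fin 3) ℂ) j := by
  have h : ∀ i : Fin 3, Continuous fun U : SU3 => (U : Matrix (Fin 3) (Fin 3) ℂ) i j :=
    fun i => (continuous_apply j).comp ((continuous_apply i).comp continuous_subtype_val)
  exact continuous_mk3 (h 0) (h 1) (h 2)

/-! ### The two pieces of `spaceWX` -/

def setA (ε : ℝ) : Set (C3 × C3) :=
  {p | dotProd p.1 p.2 = 0 ∧ ‖p.1‖ ^ 2 + ‖p.2‖ ^ 2 = 1 ∧ 0 < ‖p.1‖ ^ 2 ∧ ‖p.1‖ ^ 2 < ε}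

def setB (ε : ℝ) : Set (C3 × C3) :=
  {p | dotProd p.1 p.2 = 0 ∧ ‖p.1‖ ^ 2 + ‖p.2‖ ^ 2 = 1 ∧ 0 < ‖p.2‖ ^ 2 ∧ ‖p.2‖ ^ 2 < ε}

lemma ne_zero_of_sq_pos {z : C3} (h : 0 < ‖z‖ ^ 2) : z ≠ 0 := by
  intro h0
  rw [h0] at h
  simp at h

lemma sq_pos_of_ne_zero {z : C3} (h : z ≠ 0) : 0 < ‖z‖ ^ 2 :=
  pow_pos (norm_pos_iff.mpr h) 2

lemma setA_fst_ne {ε : ℝ} {p : C3 × C3} (hp : p ∈ setA ε) : p.1 ≠ 0 :=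
  ne_zero_of_sq_pos hp.2.2.1

lemma setA_snd_ne {ε : ℝ} (hε1 : ε < 1/2) {p : C3 × C3} (hp : p ∈ setA ε) : p.2 ≠ 0 := by
  refine ne_zero_of_sq_pos ?_
  have h1 := hp.2.1
  have h2 := hp.2.2.2
  nlinarith

/-! ### The map `setA ε → SU3` -/

noncomputable def fFun (p : C3 × C3) : Matrix (Fin 3) (Fin 3) ℂ :=
  matOf (unitz p.1) (conj3 (unitz p.2))

lemma fFun_mem {ε : ℝ} (hε1 : ε < 1/2) {p : C3 × C3} (hp : p ∈ setA ε) : fFun p ∈ SU3 := by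
  have hz : p.1 ≠ 0 := setA_fst_ne hp
  have hw : p.2 ≠ 0 := setA_snd_ne hε1 hp
  refine matOf_mem _ _ ?_ ?_ ?_
  · rw [sum_conj_mul, norm_unitz _ hz]; norm_num
  · have : ∀ i, (starRingEnd ℂ) (conj3 (unitz p.2) i) * conj3 (unitz p.2) i
        = (starRingEnd ℂ) (unitz p.2 i) * unitz p.2 i := by
      intro i; simp [mul_comm]
    rw [Finset.sum_congr rfl (fun i _ => this i), sum_conj_mul, norm_unitz _ hw]; norm_num
  · have h0 : dotProd (unitz p.1) (unitz p.2) = 0 := dotProd_unitz _ _ hp.1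
    have : ∀ i, (starRingEnd ℂ) (unitz p.1 i) * conj3 (unitz p.2) i
        = (starRingEnd ℂ) (unitz p.1 i * unitz p.2 i) := by
      intro i; simp [_root_.map_mul]
    rw [Finset.sum_congr rfl (fun i _ => this i), ← map_sum]
    rw [show (∑ i, unitz p.1 i * unitz p.2 i) = dotProd (unitz p.1) (unitz p.2) from rfl, h0]
    simp

/-! ### The map `SU3 → setA ε` -/

noncomputable def gFun (ε : ℝ) (U : Matrix (Fin 3) (Fin 3) ℂ) : C3 × C3 :=
  (Real.sqrt (ε/2) • colv U 0, Real.sqrt (1 - ε/2) • conj3 (colv U 1))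

lemma gFun_mem {ε : ℝ} (hε0 : 0 < ε) (hε1 : ε < 1/2) {U : Matrix (Fin 3) (Fin 3) ℂ}
    (hU : U ∈ SU3) : gFun ε U ∈ setA ε := by
  obtain ⟨h0, h1, h01⟩ := colv_facts U hU
  have hn0 : ‖colv U 0‖ = 1 := norm_eq_one_of _ h0
  have hn1 : ‖colv U 1‖ = 1 := norm_eq_one_of _ h1
  have ht0 : (0:ℝ) < ε/2 := by linarith
  have ht1 : ε/2 < 1 := by linarith
  have hs1 : ‖Real.sqrt (ε/2) • colv U 0‖ ^ 2 = ε/2 := by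
    rw [norm_smul, Real.norm_eq_abs, _root_.abs_of_nonneg (Real.sqrt_nonneg _), hn0, mul_one,
      Real.sq_sqrt ht0.le]
  have hs2 : ‖Real.sqrt (1 - ε/2) • conj3 (colv U 1)‖ ^ 2 = 1 - ε/2 := by
    rw [norm_smul, Real.norm_eq_abs, _root_.abs_of_nonneg (Real.sqrt_nonneg _), norm_conj3, hn1,
      mul_one, Real.sq_sqrt (by linarith)]
  refine ⟨?_, ?_, ?_, ?_⟩
  · rw [show (gFun ε U).1 = Real.sqrt (ε/2) • colv U 0 from rfl,
      show (gFun ε U).2 = Real.sqrt (1 - ε/2) • conj3 (colv U 1) from rfl,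
      dotProd_smul_left, dotProd_smul_right]
    have : dotProd (colv U 0) (conj3 (colv U 1)) = 0 := by
      rw [dotProd]
      have : ∀ i, colv U 0 i * conj3 (colv U 1) i
          = (starRingEnd ℂ) ((starRingEnd ℂ) (colv U 0 i) * colv U 1 i) := by
        intro i; simp [_root_.map_mul]
      rw [Finset.sum_congr rfl (fun i _ => this i), ← map_sum, h01]
      simp
    rw [this, mul_zero, mul_zero]
  · show ‖Real.sqrt (ε/2) • colv U 0‖ ^ 2 + ‖Real.sqrt (1 - ε/2) • conj3 (colv U 1)‖ ^ 2 = 1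
    rw [hs1, hs2]; ring
  · show 0 < ‖Real.sqrt (ε/2) • colv U 0‖ ^ 2
    rw [hs1]; linarith
  · show ‖Real.sqrt (ε/2) • colv U 0‖ ^ 2 < ε
    rw [hs1]; linarith

/-! ### Bundled continuous maps -/

noncomputable def fMap (ε : ℝ) (hε1 : ε < 1/2) : C(setA ε, SU3) := by
  refine ⟨fun p => ⟨fFun (p : C3 × C3), fFun_mem hε1 p.2⟩, ?_⟩
  refine Continuous.subtype_mk ?_ _
  have hc1 : Continuous fun p : setA ε => (p : C3 × C3).1 :=
    continuous_fst.comp continuous_subtype_val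
  have hc2 : Continuous fun p : setA ε => (p : C3 × C3).2 :=
    continuous_snd.comp continuous_subtype_val
  have hn1 : Continuous fun p : setA ε => ‖(p : C3 × C3).1‖⁻¹ :=
    (hc1.norm).inv₀ (fun p => norm_ne_zero_iff.mpr (setA_fst_ne p.2))
  have hn2 : Continuous fun p : setA ε => ‖(p : C3 × C3).2‖⁻¹ :=
    (hc2.norm).inv₀ (fun p => norm_ne_zero_iff.mpr (setA_snd_ne hε1 p.2))
  exact continuous_matOf (hn1.smul hc1) (continuous_conj3.comp (hn2.smul hc2))

noncomputable def gMap (ε : ℝ) (hε0 : 0 < ε) (hε1 : ε < 1/2) : C(SU3, setA ε) := by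
  refine ⟨fun U => ⟨gFun ε (U : Matrix (Fin 3) (Fin 3) ℂ), gFun_mem hε0 hε1 U.2⟩, ?_⟩
  refine Continuous.subtype_mk ?_ _
  exact ((continuous_const (y := Real.sqrt (ε/2))).smul (continuous_colv 0)).prodMk
    ((continuous_const (y := Real.sqrt (1 - ε/2))).smul (continuous_conj3.comp (continuous_colv 1)))

/-! ### `f ∘ g = id` on SU3 -/

lemma fFun_gFun {ε : ℝ} (hε0 : 0 < ε) (hε1 : ε < 1/2) {U : Matrix (Fin 3) (Fin 3) ℂ}
    (hU : U ∈ SU3) : fFun (gFun ε U) = U := by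
  obtain ⟨h0, h1, _⟩ := colv_facts U hU
  have hn0 : ‖colv U 0‖ = 1 := norm_eq_one_of _ h0
  have hn1 : ‖colv U 1‖ = 1 := norm_eq_one_of _ h1
  have ht0 : (0:ℝ) < Real.sqrt (ε/2) := Real.sqrt_pos.mpr (by linarith)
  have ht1 : (0:ℝ) < Real.sqrt (1 - ε/2) := Real.sqrt_pos.mpr (by linarith)
  have e1 : unitz ((gFun ε U).1) = colv U 0 := by
    rw [show (gFun ε U).1 = Real.sqrt (ε/2) • colv U 0 from rfl]
    exact unitz_smul _ hn0 _ ht0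
  have e2 : conj3 (unitz ((gFun ε U).2)) = colv U 1 := by
    rw [show (gFun ε U).2 = Real.sqrt (1 - ε/2) • conj3 (colv U 1) from rfl]
    rw [unitz_smul _ (by rw [norm_conj3]; exact hn1) _ ht1, conj3_conj3]
  rw [fFun, e1, e2, matOf_col U hU]

/-! ### Membership of rescalings in `setA` -/

lemma scale_mem {ε : ℝ} {p : C3 × C3} (hp : p ∈ setA ε) (hε1 : ε < 1/2)
    {a b : ℝ} (ha : 0 < a) (hb : 0 ≤ b) (hab : a + b = 1) (haε : a < ε) :
    (Real.sqrt a • unitz p.1, Real.sqrt b • unitz p.2) ∈ setA ε := by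
  have hz : p.1 ≠ 0 := setA_fst_ne hp
  have hw : p.2 ≠ 0 := setA_snd_ne hε1 hp
  have n1 : ‖Real.sqrt a • unitz p.1‖ = Real.sqrt a :=
    norm_smul_unitz _ hz _ (Real.sqrt_nonneg _)
  have n2 : ‖Real.sqrt b • unitz p.2‖ = Real.sqrt b :=
    norm_smul_unitz _ hw _ (Real.sqrt_nonneg _)
  refine ⟨?_, ?_, ?_, ?_⟩
  · show dotProd (Real.sqrt a • unitz p.1) (Real.sqrt b • unitz p.2) = 0
    rw [dotProd_smul_left, dotProd_smul_right, dotProd_unitz _ _ hp.1, mul_zero, mul_zero]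
  · show ‖Real.sqrt a • unitz p.1‖ ^ 2 + ‖Real.sqrt b • unitz p.2‖ ^ 2 = 1
    rw [n1, n2, Real.sq_sqrt ha.le, Real.sq_sqrt hb]; exact hab
  · show 0 < ‖Real.sqrt a • unitz p.1‖ ^ 2
    rw [n1, Real.sq_sqrt ha.le]; exact ha
  · show ‖Real.sqrt a • unitz p.1‖ ^ 2 < ε
    rw [n1, Real.sq_sqrt ha.le]; exact haε

/-! ### The deformation-retraction homotopy -/

noncomputable def retrH (ε : ℝ) (hε0 : 0 < ε) (hε1 : ε < 1/2) :
    Homotopy ((gMap ε hε0 hε1).comp (fMap ε hε1)) (ContinuousMap.id (setA ε)) := by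
  have key : ∀ (s : ℝ) (p : setA ε), 0 ≤ s → s ≤ 1 →
      ((1-s) * (ε/2) + s * ‖(p : C3 × C3).1‖^2) +
      ((1-s) * (1 - ε/2) + s * ‖(p : C3 × C3).2‖^2) = 1 ∧
      0 < (1-s) * (ε/2) + s * ‖(p : C3 × C3).1‖^2 ∧
      (1-s) * (ε/2) + s * ‖(p : C3 × C3).1‖^2 < ε := by
    intro s p hs0 hs1
    obtain ⟨hdot, hsum, hpos, hlt⟩ := p.2
    refine ⟨by nlinarith, ?_, ?_⟩
    · rcases eq_or_lt_of_le hs1 with h | h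
      · subst h; simpa using hpos
      · nlinarith
    · rcases eq_or_lt_of_le hs0 with h | h
      · rw [← h]; simp; linarith
      · nlinarith
  refine ⟨⟨fun q => ⟨(Real.sqrt ((1-(q.1:ℝ)) * (ε/2) + (q.1:ℝ) * ‖(q.2 : C3 × C3).1‖^2) •
      unitz (q.2 : C3 × C3).1,
      Real.sqrt ((1-(q.1:ℝ)) * (1 - ε/2) + (q.1:ℝ) * ‖(q.2 : C3 × C3).2‖^2) •
      unitz (q.2 : C3 × C3).2), ?_⟩, ?_⟩, ?_, ?_⟩
  · obtain ⟨h1, h2, h3⟩ := key q.1 q.2 q.1.2.1 q.1.2.2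
    have hb : 0 ≤ (1-(q.1:ℝ)) * (1 - ε/2) + (q.1:ℝ) * ‖(q.2 : C3 × C3).2‖^2 :=
      add_nonneg (mul_nonneg (by linarith [unitInterval.le_one q.1]) (by linarith))
        (mul_nonneg q.1.2.1 (sq_nonneg _))
    exact scale_mem q.2.2 hε1 h2 hb h1 h3
  · -- continuity
    have hc1 : Continuous fun q : I × setA ε => ((q.2 : C3 × C3)).1 :=
      continuous_fst.comp (continuous_subtype_val.comp continuous_snd)
    have hc2 : Continuous fun q : I × setA ε => ((q.2 : C3 × C3)).2 :=
      continuous_snd.comp (continuous_subtype_val.comp continuous_snd)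
    have hs : Continuous fun q : I × setA ε => (q.1 : ℝ) :=
      continuous_subtype_val.comp continuous_fst
    have hu1 : Continuous fun q : I × setA ε => unitz ((q.2 : C3 × C3)).1 :=
      ((hc1.norm).inv₀ fun q => norm_ne_zero_iff.mpr (setA_fst_ne q.2.2)).smul hc1
    have hu2 : Continuous fun q : I × setA ε => unitz ((q.2 : C3 × C3)).2 :=
      ((hc2.norm).inv₀ fun q => norm_ne_zero_iff.mpr (setA_snd_ne hε1 q.2.2)).smul hc2
    have ha : Continuous fun q : I × setA ε =>
        Real.sqrt ((1-(q.1:ℝ)) * (ε/2) + (q.1:ℝ) * ‖(q.2 : C3 × C3).1‖^2) :=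
      Real.continuous_sqrt.comp ((((continuous_const.sub hs).mul continuous_const).add
        (hs.mul ((hc1.norm).pow 2))))
    have hb : Continuous fun q : I × setA ε =>
        Real.sqrt ((1-(q.1:ℝ)) * (1 - ε/2) + (q.1:ℝ) * ‖(q.2 : C3 × C3).2‖^2) :=
      Real.continuous_sqrt.comp ((((continuous_const.sub hs).mul continuous_const).add
        (hs.mul ((hc2.norm).pow 2))))
    exact Continuous.subtype_mk ((ha.smul hu1).prodMk (hb.smul hu2)) _
  · -- value at 0 : g ∘ f
    intro p
    obtain ⟨hdot, hsum, hpos, hlt⟩ := p.2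
    have hz : (p : C3 × C3).1 ≠ 0 := setA_fst_ne p.2
    have hw : (p : C3 × C3).2 ≠ 0 := setA_snd_ne hε1 p.2
    refine Subtype.ext (Prod.ext ?_ ?_)
    · show Real.sqrt ((1-(0:ℝ)) * (ε/2) + (0:ℝ) * ‖(p : C3 × C3).1‖^2) • unitz (p : C3 × C3).1
        = (gFun ε (fFun (p : C3 × C3))).1
      rw [show (gFun ε (fFun (p : C3 × C3))).1
          = Real.sqrt (ε/2) • colv (fFun (p : C3 × C3)) 0 from rfl]
      rw [fFun, colv_matOf_zero]
      norm_num [unitz]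
    · show Real.sqrt ((1-(0:ℝ)) * (1 - ε/2) + (0:ℝ) * ‖(p : C3 × C3).2‖^2) • unitz (p : C3 × C3).2
        = (gFun ε (fFun (p : C3 × C3))).2
      rw [show (gFun ε (fFun (p : C3 × C3))).2
          = Real.sqrt (1 - ε/2) • conj3 (colv (fFun (p : C3 × C3)) 1) from rfl]
      rw [fFun, colv_matOf_one, conj3_conj3]
      norm_num
  · -- value at 1 : id
    intro p
    have hz : (p : C3 × C3).1 ≠ 0 := setA_fst_ne p.2
    have hw : (p : C3 × C3).2 ≠ 0 := setA_snd_ne hε1 p.2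
    refine Subtype.ext (Prod.ext ?_ ?_)
    · show Real.sqrt ((1-(1:ℝ)) * (ε/2) + (1:ℝ) * ‖(p : C3 × C3).1‖^2) • unitz (p : C3 × C3).1
        = (p : C3 × C3).1
      rw [show (1-(1:ℝ)) * (ε/2) + (1:ℝ) * ‖(p : C3 × C3).1‖^2 = ‖(p : C3 × C3).1‖^2 by ring,
        Real.sqrt_sq (norm_nonneg _)]
      exact smul_unitz_self _ hz
    · show Real.sqrt ((1-(1:ℝ)) * (1 - ε/2) + (1:ℝ) * ‖(p : C3 × C3).2‖^2) • unitz (p : C3 × C3).2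
        = (p : C3 × C3).2
      rw [show (1-(1:ℝ)) * (1 - ε/2) + (1:ℝ) * ‖(p : C3 × C3).2‖^2 = ‖(p : C3 × C3).2‖^2 by ring,
        Real.sqrt_sq (norm_nonneg _)]
      exact smul_unitz_self _ hw

/-! ### The homotopy equivalence `setA ε ≃ₕ SU3` -/

noncomputable def equivA (ε : ℝ) (hε0 : 0 < ε) (hε1 : ε < 1/2) :
    HomotopyEquiv (setA ε) SU3 where
  toFun := fMap ε hε1
  invFun := gMap ε hε0 hε1
  left_inv := ⟨retrH ε hε0 hε1⟩
  right_inv := by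
    have : (fMap ε hε1).comp (gMap ε hε0 hε1) = ContinuousMap.id SU3 :=
      ContinuousMap.ext fun U => Subtype.ext (fFun_gFun hε0 hε1 U.2)
    rw [this]

/-! ### Sum gadgets -/

section SumGadgets
variable {X Y Z W : Type*} [TopologicalSpace X] [TopologicalSpace Y] [TopologicalSpace Z]
  [TopologicalSpace W]

/-- Sum of two continuous maps. -/
def cmSumMap (f : C(X, Y)) (g : C(Z, W)) : C(X ⊕ Z, Y ⊕ W) :=
  ⟨Sum.map f g, f.continuous.sumMap g.continuous⟩

/-- Sum of two homotopies. -/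
noncomputable def homotopySumMap {f₀ f₁ : C(X, Y)} {g₀ g₁ : C(Z, W)}
    (F : Homotopy f₀ f₁) (G : Homotopy g₀ g₁) :
    Homotopy (cmSumMap f₀ g₀) (cmSumMap f₁ g₁) where
  toFun := fun q => Sum.map (⇑F) (⇑G)
    ((Homeomorph.prodSumDistrib (X := I) (Y := X) (Z := Z)) q)
  continuous_toFun := (F.continuous.sumMap G.continuous).comp (Homeomorph.continuous _)
  map_zero_left := by
    rintro (x | z)
    · show Sum.map (⇑F) (⇑G) (Sum.inl (0, x)) = _
      simp [cmSumMap]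
    · show Sum.map (⇑F) (⇑G) (Sum.inr (0, z)) = _
      simp [cmSumMap]
  map_one_left := by
    rintro (x | z)
    · show Sum.map (⇑F) (⇑G) (Sum.inl (1, x)) = _
      simp [cmSumMap]
    · show Sum.map (⇑F) (⇑G) (Sum.inr (1, z)) = _
      simp [cmSumMap]

/-- Sum of two homotopy equivalences. -/
noncomputable def homotopyEquivSumCongr (e₁ : HomotopyEquiv X Y) (e₂ : HomotopyEquiv Z W) :
    HomotopyEquiv (X ⊕ Z) (Y ⊕ W) where
  toFun := cmSumMap e₁.toFun e₂.toFun
  invFun := cmSumMap e₁.invFun e₂.invFun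
  left_inv := by
    obtain ⟨F⟩ := e₁.left_inv
    obtain ⟨G⟩ := e₂.left_inv
    refine ⟨(homotopySumMap F G).cast ?_ ?_⟩ <;> ext (x | z) <;> rfl
  right_inv := by
    obtain ⟨F⟩ := e₁.right_inv
    obtain ⟨G⟩ := e₂.right_inv
    refine ⟨(homotopySumMap F G).cast ?_ ?_⟩ <;> ext (x | z) <;> rfl

/-- inclusion of a relatively open subset is an open map. -/
lemma isOpenMap_inclusion' {α : Type*} [TopologicalSpace α] {A S O : Set α}
    (hAS : A ⊆ S) (hO : IsOpen O) (hA : A = S ∩ O) :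
    IsOpenMap (Set.inclusion hAS) := by
  intro U hU
  rw [isOpen_induced_iff] at hU
  obtain ⟨V, hV, rfl⟩ := hU
  have : Set.inclusion hAS '' (Subtype.val ⁻¹' V) =
      (Subtype.val : S → α) ⁻¹' (V ∩ O) := by
    ext ⟨x, hxS⟩
    simp only [Set.mem_image, Set.mem_preimage, Set.inclusion]
    constructor
    · rintro ⟨⟨a, haA⟩, haV, h⟩
      cases h
      exact ⟨haV, (hA ▸ haA).2⟩
    · rintro ⟨hxV, hxO⟩
      exact ⟨⟨x, hA ▸ ⟨hxS, hxO⟩⟩, hxV, rfl⟩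
  rw [this]
  exact (hV.inter hO).preimage continuous_subtype_val

/-- A set split into two disjoint relatively open pieces is homeomorphic to their sum. -/
noncomputable def unionHomeomorphSum {α : Type*} [TopologicalSpace α] {A B S O O' : Set α}
    (hO : IsOpen O) (hO' : IsOpen O') (hA : A = S ∩ O) (hB : B = S ∩ O')
    (hUnion : S = A ∪ B) (hdisj : ∀ x ∈ A, x ∉ B) :
    S ≃ₜ (A ⊕ B) := by
  classical
  have hAS : A ⊆ S := by rw [hUnion]; exact Set.subset_union_left
  have hBS : B ⊆ S := by rw [hUnion]; exact Set.subset_union_right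
  have hmem : ∀ x : S, (x : α) ∉ A → (x : α) ∈ B := by
    intro x h
    have h2 : (x : α) ∈ A ∪ B := by rw [← hUnion]; exact x.2
    exact h2.resolve_left h
  refine (Equiv.toHomeomorphOfContinuousOpen
    (⟨Sum.elim (Set.inclusion hAS) (Set.inclusion hBS),
      fun x => if h : (x : α) ∈ A then Sum.inl ⟨x, h⟩ else Sum.inr ⟨x, hmem x h⟩,
      ?_, ?_⟩ : (A ⊕ B) ≃ S)
    ((continuous_inclusion hAS).sumElim (continuous_inclusion hBS))
    ((isOpenMap_inclusion' hAS hO hA).sumElim (isOpenMap_inclusion' hBS hO' hB))).symm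
  · rintro (⟨x, hx⟩ | ⟨x, hx⟩) <;> dsimp [Set.inclusion]
    · rw [dif_pos hx]
    · rw [dif_neg (fun h => hdisj _ h hx)]
  · intro x
    dsimp [Set.inclusion]
    split_ifs with h <;> rfl

end SumGadgets

/-! ### The swap homeomorphism `setB ε ≃ₜ setA ε` -/

noncomputable def swapHomeo (ε : ℝ) : setB ε ≃ₜ setA ε := by
  have hBA : ∀ p : C3 × C3, p ∈ setB ε → (p.2, p.1) ∈ setA ε := by
    rintro p ⟨h1, h2, h3, h4⟩
    exact ⟨by rw [show (p.2, p.1).1 = p.2 from rfl, show (p.2, p.1).2 = p.1 from rfl,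
      dotProd_comm, h1], by simpa using by linarith, h3, h4⟩
  have hAB : ∀ p : C3 × C3, p ∈ setA ε → (p.2, p.1) ∈ setB ε := by
    rintro p ⟨h1, h2, h3, h4⟩
    exact ⟨by rw [show (p.2, p.1).1 = p.2 from rfl, show (p.2, p.1).2 = p.1 from rfl,
      dotProd_comm, h1], by simpa using by linarith, h3, h4⟩
  refine ⟨⟨fun p => ⟨((p : C3 × C3).2, (p : C3 × C3).1), hBA _ p.2⟩,
    fun p => ⟨((p : C3 × C3).2, (p : C3 × C3).1), hAB _ p.2⟩, ?_, ?_⟩, ?_, ?_⟩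
  · intro p; rfl
  · intro p; rfl
  · exact Continuous.subtype_mk ((continuous_snd.comp continuous_subtype_val).prodMk
      (continuous_fst.comp continuous_subtype_val)) _
  · exact Continuous.subtype_mk ((continuous_snd.comp continuous_subtype_val).prodMk
      (continuous_fst.comp continuous_subtype_val)) _

/-! ### Splitting `spaceWX` -/

lemma setA_eq (ε : ℝ) (hε0 : 0 < ε) (hε1 : ε < 1/2) :
    setA ε = spaceWX ε ∩ {p : C3 × C3 | ‖p.1‖ ^ 2 < ε} := by
  ext p
  constructor
  · rintro ⟨h1, h2, h3, h4⟩
    have hz : p.1 ≠ 0 := ne_zero_of_sq_pos h3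
    have hw : p.2 ≠ 0 := ne_zero_of_sq_pos (by nlinarith)
    exact ⟨⟨hz, hw, h1, h2, Or.inl h4⟩, h4⟩
  · rintro ⟨⟨hz, hw, h1, h2, _⟩, h4⟩
    exact ⟨h1, h2, sq_pos_of_ne_zero hz, h4⟩

lemma setB_eq (ε : ℝ) (hε0 : 0 < ε) (hε1 : ε < 1/2) :
    setB ε = spaceWX ε ∩ {p : C3 × C3 | ‖p.2‖ ^ 2 < ε} := by
  ext p
  constructor
  · rintro ⟨h1, h2, h3, h4⟩
    have hw : p.2 ≠ 0 := ne_zero_of_sq_pos h3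
    have hz : p.1 ≠ 0 := ne_zero_of_sq_pos (by nlinarith)
    exact ⟨⟨hz, hw, h1, h2, Or.inr h4⟩, h4⟩
  · rintro ⟨⟨hz, hw, h1, h2, _⟩, h4⟩
    exact ⟨h1, h2, sq_pos_of_ne_zero hw, h4⟩

lemma spaceWX_union (ε : ℝ) (hε0 : 0 < ε) (hε1 : ε < 1/2) :
    spaceWX ε = setA ε ∪ setB ε := by
  ext p
  constructor
  · rintro ⟨hz, hw, h1, h2, h3 | h3⟩
    · exact Or.inl ⟨h1, h2, sq_pos_of_ne_zero hz, h3⟩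
    · exact Or.inr ⟨h1, h2, sq_pos_of_ne_zero hw, h3⟩
  · rintro (h | h)
    · exact ((setA_eq ε hε0 hε1) ▸ h).1
    · exact ((setB_eq ε hε0 hε1) ▸ h).1

lemma AB_disjoint (ε : ℝ) (hε1 : ε < 1/2) : ∀ p ∈ setA ε, p ∉ setB ε := by
  rintro p ⟨_, h2, _, h4⟩ ⟨_, _, _, h4'⟩
  linarith

end WXProof

theorem WX_homotopyEquiv_two_SU3 (ε : ℝ) (hε0 : 0 < ε) (hε1 : ε < 1 / 2) :
    Nonempty (ContinuousMap.HomotopyEquiv (spaceWX ε) (SU3 ⊕ SU3)) := by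
  have hO : IsOpen {p : C3 × C3 | ‖p.1‖ ^ 2 < ε} :=
    isOpen_lt ((continuous_fst.norm).pow 2) continuous_const
  have hO' : IsOpen {p : C3 × C3 | ‖p.2‖ ^ 2 < ε} :=
    isOpen_lt ((continuous_snd.norm).pow 2) continuous_const
  exact ⟨((WXProof.unionHomeomorphSum hO hO' (WXProof.setA_eq ε hε0 hε1)
    (WXProof.setB_eq ε hε0 hε1) (WXProof.spaceWX_union ε hε0 hε1)
    (WXProof.AB_disjoint ε hε1)).toHomotopyEquiv).trans
    (WXProof.homotopyEquivSumCongr (WXProof.equivA ε hε0 hε1)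
      ((WXProof.swapHomeo ε).toHomotopyEquiv.trans (WXProof.equivA ε hε0 hε1)))⟩
end
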